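/- arXiv:1008.2673 — 8 statements merged into one kernel-verified Lean document; each statement's English description precedes it below -/
import Mathlib

section
/- Let M be a normal matrix in ℂ^{N×N} (i.e. M Mᴴ = Mᴴ M). Then M is dissipative if and only if the spectral (operator) norm of the matrix exponential satisfies ‖exp(M)‖ ≤ 1. -/
open Matrix Set Complex

noncomputable section

/-- The Hermitian inner product `⟨x, y⟩ = ∑ j, x j * conj (y j)` on `ℂ^n`. -/
def herm {n : Type*} [Fintype n] (x y : n → ℂ) : ℂ :=
  ∑ j, x j * (starRingEnd ℂ) (y j)

/-- The squared Euclidean norm on `ℂ^n`. -/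
def enormSq {n : Type*} [Fintype n] (x : n → ℂ) : ℝ :=
  ∑ j, ‖x j‖ ^ 2

/-- A matrix `M` is dissipative if `Re (wᴴ M w) ≤ 0` for all vectors `w`. -/
def Dissipative {n : Type*} [Fintype n] (M : Matrix n n ℂ) : Prop :=
  ∀ w : n → ℂ, (herm (M.mulVec w) w).re ≤ 0

/-- The operator (spectral) norm of `A` is at most `1`:
`|A x| ≤ |x|` for every `x` (in the Euclidean norm). -/
def OpNormLeOne {n : Type*} [Fintype n] (A : Matrix n n ℂ) : Prop :=
  ∀ x : n → ℂ, enormSq (A.mulVec x) ≤ enormSq x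

set_option linter.unusedSectionVars false

namespace DissipAux

open NormedSpace

local notation "⟪" x ", " y "⟫" => @inner ℂ _ _ x y

variable {E : Type*} [NormedAddCommGroup E] [InnerProductSpace ℂ E] [CompleteSpace E]

lemma reInner_self (x : E) : (⟪x, x⟫).re = ‖x‖ ^ 2 := by
  have := inner_self_eq_norm_sq (𝕜 := ℂ) x
  simpa using this

lemma reInner_le (x y : E) : (⟪x, y⟫).re ≤ ‖x‖ * ‖y‖ := by
  have := re_inner_le_norm (𝕜 := ℂ) x y
  simpa using this

lemma hasDerivAt_expApply (A : E →L[ℂ] E) (x : E) (t : ℝ) :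
    HasDerivAt (fun s : ℝ => exp (s • A) x) (A (exp (t • A) x)) t := by
  have h1 : HasDerivAt (fun u : ℝ => exp (u • A)) (A * exp (t • A)) t :=
    hasDerivAt_exp_smul_const' A t
  have h2 := ((ContinuousLinearMap.apply ℂ E x).restrictScalars ℝ).hasFDerivAt.comp_hasDerivAt t h1
  simpa [Function.comp_def] using h2

lemma hasDerivAt_normSq (A : E →L[ℂ] E) (x : E) (t : ℝ) :
    HasDerivAt (fun s : ℝ => (⟪exp (s • A) x, exp (s • A) x⟫).re)
      (2 * (⟪exp (t • A) x, A (exp (t • A) x)⟫).re) t := by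
  have h := (hasDerivAt_expApply A x t).inner ℂ (hasDerivAt_expApply A x t)
  have h2 := Complex.reCLM.hasFDerivAt.comp_hasDerivAt t h
  have hsym : (⟪A (exp (t • A) x), exp (t • A) x⟫).re
      = (⟪exp (t • A) x, A (exp (t • A) x)⟫).re := by
    have := inner_re_symm (𝕜 := ℂ) (A (exp (t • A) x)) (exp (t • A) x)
    simpa using this
  refine h2.congr_deriv ?_
  simp only [ContinuousLinearMap.coe_comp', Function.comp_apply, Complex.reCLM_apply,
    Complex.add_re]
  linarith [hsym]

lemma norm_expApply_le (A : E →L[ℂ] E) (hA : ∀ w : E, (⟪w, A w⟫).re ≤ 0) (x : E) :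
    ‖exp A x‖ ≤ ‖x‖ := by
  set g : ℝ → ℝ := fun s => (⟪exp (s • A) x, exp (s • A) x⟫).re with hgdef
  have hder : ∀ t : ℝ, HasDerivAt g
      (2 * (⟪exp (t • A) x, A (exp (t • A) x)⟫).re) t := fun t => hasDerivAt_normSq A x t
  have hmono : Antitone g := by
    refine antitone_of_deriv_nonpos (fun t => (hder t).differentiableAt) (fun t => ?_)
    rw [(hder t).deriv]
    have := hA (exp (t • A) x)
    linarith
  have h01 : g 1 ≤ g 0 := hmono zero_le_one
  have e1 : g 1 = ‖exp A x‖ ^ 2 := by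
    simp only [hgdef, one_smul]
    exact reInner_self _
  have e0 : g 0 = ‖x‖ ^ 2 := by
    have h00 : ((0:ℝ) • A : E →L[ℂ] E) = 0 := zero_smul _ _
    simp only [hgdef, h00]
    rw [NormedSpace.exp_zero]
    simp only [ContinuousLinearMap.one_apply]
    exact reInner_self _
  refine le_of_pow_le_pow_left₀ two_ne_zero (norm_nonneg x) ?_
  rw [← e1, ← e0]; exact h01

set_option maxHeartbeats 1000000 in
lemma dissip_of_norm_exp_le (A : E →L[ℂ] E) (hcomm : A * star A = star A * A)
    (h1 : ∀ x : E, ‖exp A x‖ ≤ ‖x‖) (w : E) : (⟪w, A w⟫).re ≤ 0 := by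
  let +nondep : NormedAlgebra ℚ (E →L[ℂ] E) := .restrictScalars ℚ ℂ (E →L[ℂ] E)
  set H : E →L[ℂ] E := star A + A with hHdef
  have hHsa : star H = H := by
    simp only [hHdef, star_add, star_star]
    exact add_comm _ _
  have hc : Commute (star A) A := (hcomm.symm : _)
  have hexpH : exp H = star (exp A) * exp A := by
    rw [hHdef, NormedSpace.exp_add_of_commute hc, NormedSpace.star_exp]
  have key0 : ∀ x : E, (⟪x, exp H x⟫).re = ‖exp A x‖ ^ 2 := by
    intro x
    rw [hexpH]
    have h2 : (star (exp A) * exp A) x = star (exp A) (exp A x) := rfl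
    rw [h2, ContinuousLinearMap.star_eq_adjoint, ContinuousLinearMap.adjoint_inner_right]
    exact reInner_self _
  have hsa : ∀ s : ℝ, star (exp (s • H)) = exp (s • H) := by
    intro s
    rw [NormedSpace.star_exp]
    congr 1
    rw [star_smul, hHsa, star_trivial]
  have hhalf : ∀ s : ℝ, (∀ x : E, (⟪x, exp ((2*s) • H) x⟫).re ≤ ‖x‖ ^ 2) →
      ∀ x : E, ‖exp (s • H) x‖ ^ 2 ≤ ‖x‖ ^ 2 := by
    intro s hs x
    have hBB : exp (s • H) * exp (s • H) = exp ((2*s) • H) := by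
      rw [← NormedSpace.exp_add_of_commute (Commute.refl _)]
      congr 1
      rw [← add_smul]
      ring_nf
    have heq : ‖exp (s • H) x‖ ^ 2 = (⟪x, exp ((2*s) • H) x⟫).re := by
      rw [← reInner_self]
      congr 1
      calc ⟪exp (s • H) x, exp (s • H) x⟫
          = ⟪x, (ContinuousLinearMap.adjoint (exp (s • H))) (exp (s • H) x)⟫ :=
            (ContinuousLinearMap.adjoint_inner_right _ x _).symm
        _ = ⟪x, exp ((2*s) • H) x⟫ := by
            rw [← ContinuousLinearMap.star_eq_adjoint, hsa, ← hBB]; rfl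
    rw [heq]; exact hs x
  have hs2 : ∀ n : ℕ, 2 * ((1:ℝ)/2^(n+1)) = (1:ℝ)/2^n := by
    intro n
    rw [pow_succ]
    field_simp
  have hP : ∀ n : ℕ, ∀ x : E, (⟪x, exp (((1:ℝ)/2^n) • H) x⟫).re ≤ ‖x‖ ^ 2 := by
    intro n
    induction n with
    | zero =>
      intro x
      have h10 : ((1:ℝ)/2^(0:ℕ)) • H = H := by norm_num
      rw [h10, key0]
      exact pow_le_pow_left₀ (norm_nonneg _) (h1 x) 2
    | succ n ih =>
      intro x
      have hQ := hhalf ((1:ℝ)/2^(n+1)) (by rw [hs2]; exact ih)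
      have hb : ‖exp (((1:ℝ)/2^(n+1)) • H) x‖ ≤ ‖x‖ :=
        le_of_pow_le_pow_left₀ two_ne_zero (norm_nonneg _) (hQ x)
      calc (⟪x, exp (((1:ℝ)/2^(n+1)) • H) x⟫).re
          ≤ ‖x‖ * ‖exp (((1:ℝ)/2^(n+1)) • H) x‖ := reInner_le _ _
        _ ≤ ‖x‖ * ‖x‖ := mul_le_mul_of_nonneg_left hb (norm_nonneg x)
        _ = ‖x‖ ^ 2 := (sq ‖x‖).symm
  have hgseq : ∀ n : ℕ, ‖exp (((1:ℝ)/2^(n+1)) • H) w‖ ^ 2 ≤ ‖w‖ ^ 2 := by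
    intro n
    refine hhalf _ ?_ w
    rw [hs2]
    exact hP n
  set g : ℝ → ℝ := fun s => (⟪exp (s • H) w, exp (s • H) w⟫).re with hgdef
  have h00 : ((0:ℝ) • H : E →L[ℂ] E) = 0 := zero_smul _ _
  have hder : HasDerivAt g (2 * (⟪w, H w⟫).re) 0 := by
    have h := hasDerivAt_normSq H w 0
    rw [h00, NormedSpace.exp_zero] at h
    simpa [hgdef] using h
  have hg0 : g 0 = ‖w‖ ^ 2 := by
    simp only [hgdef, h00]
    rw [NormedSpace.exp_zero]
    simp only [ContinuousLinearMap.one_apply]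
    exact reInner_self _
  have hgt : ∀ n : ℕ, g ((1:ℝ)/2^(n+1)) ≤ g 0 := by
    intro n
    rw [hg0]
    have h2 := hgseq n
    have h3 : g ((1:ℝ)/2^(n+1)) = ‖exp (((1:ℝ)/2^(n+1)) • H) w‖ ^ 2 := by
      simp only [hgdef]
      exact reInner_self _
    rw [h3]; exact h2
  have hslope := hasDerivAt_iff_tendsto_slope.mp hder
  have htend0 : Filter.Tendsto (fun n : ℕ => (1:ℝ)/2^(n+1)) Filter.atTop (nhds 0) := by
    have hh : ∀ n : ℕ, (1:ℝ)/2^(n+1) = (1/2 : ℝ)^(n+1) := by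
      intro n; rw [div_pow]; norm_num
    have h4 := tendsto_pow_atTop_nhds_zero_of_lt_one
      (by norm_num : (0:ℝ) ≤ 1/2) (by norm_num : (1/2:ℝ) < 1)
    have h5 := h4.comp (Filter.tendsto_add_atTop_nat 1)
    simpa [Function.comp_def, hh] using h5
  have htend : Filter.Tendsto (fun n : ℕ => (1:ℝ)/2^(n+1)) Filter.atTop
      (nhdsWithin 0 {x | x ≠ 0}) :=
    tendsto_nhdsWithin_of_tendsto_nhds_of_eventually_within _ htend0
      (Filter.Eventually.of_forall fun n => by
        simp only [Set.mem_setOf_eq]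
        positivity)
  have hcomp := hslope.comp htend
  have hle : ∀ n : ℕ, slope g 0 ((1:ℝ)/2^(n+1)) ≤ 0 := by
    intro n
    rw [slope_def_field]
    apply div_nonpos_of_nonpos_of_nonneg
    · have := hgt n; linarith
    · have : (0:ℝ) < (1:ℝ)/2^(n+1) := by positivity
      linarith
  have hd0 : 2 * (⟪w, H w⟫).re ≤ 0 :=
    le_of_tendsto hcomp (Filter.Eventually.of_forall hle)
  have hHw : (⟪w, H w⟫).re = (⟪w, A w⟫).re + (⟪w, A w⟫).re := by
    have h6 : H w = star A w + A w := rfl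
    rw [h6, inner_add_right, Complex.add_re]
    have h7 : (⟪w, star A w⟫).re = (⟪w, A w⟫).re := by
      rw [ContinuousLinearMap.star_eq_adjoint, ContinuousLinearMap.adjoint_inner_right]
      have := inner_re_symm (𝕜 := ℂ) (A w) w
      simpa using this
    rw [h7]
  rw [hHw] at hd0
  linarith

variable {n : Type*} [Fintype n] [DecidableEq n]

lemma toEuclideanCLM_continuous :
    Continuous (fun A : Matrix n n ℂ => Matrix.toEuclideanCLM (𝕜 := ℂ) A) := by
  have h : Continuous fun A : Matrix n n ℂ =>
      ({ toFun := fun A => Matrix.toEuclideanCLM (𝕜 := ℂ) A,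
         map_add' := fun a b => map_add _ a b,
         map_smul' := fun c a => map_smul _ c a } :
        Matrix n n ℂ →ₗ[ℂ] (EuclideanSpace ℂ n →L[ℂ] EuclideanSpace ℂ n)) A :=
    LinearMap.continuous_of_finiteDimensional _
  exact h

lemma toEuclideanCLM_exp (M : Matrix n n ℂ) :
    Matrix.toEuclideanCLM (𝕜 := ℂ) (exp M) = exp (Matrix.toEuclideanCLM (𝕜 := ℂ) M) := by
  letI : SeminormedRing (Matrix n n ℂ) := Matrix.linftyOpSemiNormedRing
  letI : NormedRing (Matrix n n ℂ) := Matrix.linftyOpNormedRing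
  letI : NormedAlgebra ℂ (Matrix n n ℂ) := Matrix.linftyOpNormedAlgebra
  letI : NormedAlgebra ℚ (Matrix n n ℂ) := Matrix.linftyOpNormedAlgebra
  exact map_exp (Matrix.toEuclideanCLM (𝕜 := ℂ) (n := n)) toEuclideanCLM_continuous M

end DissipAux

/-- A normal matrix `M` is dissipative if and only if `‖exp M‖ ≤ 1`. -/
theorem stmt0 {N : ℕ} (M : Matrix (Fin N) (Fin N) ℂ)
    (hnormal : M * Mᴴ = Mᴴ * M) :
    Dissipative M ↔ OpNormLeOne (NormedSpace.exp M) := by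
  classical
  set e : (Fin N → ℂ) ≃ EuclideanSpace ℂ (Fin N) := (WithLp.equiv 2 (Fin N → ℂ)).symm with hedef
  set φ := Matrix.toEuclideanCLM (𝕜 := ℂ) (n := Fin N) with hφdef
  have happly : ∀ (A : Matrix (Fin N) (Fin N) ℂ) (x : Fin N → ℂ),
      φ A (e x) = e (A.mulVec x) := by
    intro A x
    have := Matrix.toEuclideanCLM_toLp (𝕜 := ℂ) A x
    simpa [hφdef, hedef, Matrix.toLin'_apply] using this
  have hherm : ∀ u v : Fin N → ℂ, herm u v = @inner ℂ _ _ (e v) (e u) := by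
    intro u v
    rw [PiLp.inner_apply]
    unfold herm
    apply Finset.sum_congr rfl
    intro j _
    simp [hedef, RCLike.inner_apply, mul_comm]
  have henorm : ∀ x : Fin N → ℂ, enormSq x = ‖e x‖ ^ 2 := by
    intro x
    rw [EuclideanSpace.norm_eq, Real.sq_sqrt]
    · unfold enormSq
      apply Finset.sum_congr rfl
      intro j _
      simp [hedef]
    · positivity
  have hdiss : Dissipative M ↔
      ∀ w : EuclideanSpace ℂ (Fin N), (@inner ℂ _ _ w (φ M w)).re ≤ 0 := by
    constructor
    · intro hd w
      have h2 := hd (e.symm w)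
      rw [hherm] at h2
      rw [← happly M (e.symm w), e.apply_symm_apply] at h2
      exact h2
    · intro h w
      rw [hherm, ← happly M w]
      exact h (e w)
  have hop : OpNormLeOne (NormedSpace.exp M) ↔
      ∀ x : EuclideanSpace ℂ (Fin N), ‖NormedSpace.exp (φ M) x‖ ≤ ‖x‖ := by
    constructor
    · intro h x
      have h2 := h (e.symm x)
      rw [henorm, henorm, ← happly (NormedSpace.exp M) (e.symm x), e.apply_symm_apply,
        hφdef, DissipAux.toEuclideanCLM_exp] at h2
      exact le_of_pow_le_pow_left₀ two_ne_zero (norm_nonneg _) h2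
    · intro h x
      rw [henorm, henorm, ← happly (NormedSpace.exp M) x, hφdef,
        DissipAux.toEuclideanCLM_exp]
      exact pow_le_pow_left₀ (norm_nonneg _) (h (e x)) 2
  rw [hdiss, hop]
  constructor
  · intro hd x
    exact DissipAux.norm_expApply_le (φ M) hd x
  · intro hb w
    have hcommL : φ M * star (φ M) = star (φ M) * φ M := by
      rw [← map_star, ← _root_.map_mul, ← _root_.map_mul]
      exact congrArg φ hnormal
    exact DissipAux.dissip_of_norm_exp_le (φ M) hcommL hb w
end
end

section
/- Let A ∈ ℂ^{N×N} with spectral norm ‖A‖ ≤ 1, and let λ ∈ ℂ with |λ| = 1 be an eigenvalue of A. Then every eigenvector v of A for λ is also an eigenvector of Aᴴ for the eigenvalue conj(λ); that is, if A v = λ v then Aᴴ v = conj(λ) v. In particular, ker(A − λI)² = ker(A − λI), so λ is a semisimple eigenvalue of A. -/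
open Matrix Set Complex

noncomputable section

lemma enormSq_eq {n : Type*} [Fintype n] (x : n → ℂ) :
    enormSq x = ‖(WithLp.equiv 2 (n → ℂ)).symm x‖ ^ 2 := by
  rw [EuclideanSpace.norm_eq, Real.sq_sqrt (by positivity)]
  simp [enormSq]

local notation "⟪" x ", " y "⟫" => @inner ℂ _ _ x y

theorem key {E : Type*} [NormedAddCommGroup E] [InnerProductSpace ℂ E] [CompleteSpace E]
    (T : E →L[ℂ] E) (hT : ∀ x, ‖T x‖ ≤ ‖x‖) (lam : ℂ) (hlam : ‖lam‖ = 1)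
    (v : E) (hv : T v = lam • v) :
    ContinuousLinearMap.adjoint T v = (starRingEnd ℂ lam) • v := by
  have hTn : ‖T‖ ≤ 1 := T.opNorm_le_bound zero_le_one (by simpa using hT)
  have h1 : ‖ContinuousLinearMap.adjoint T v‖ ≤ ‖v‖ := by
    calc ‖ContinuousLinearMap.adjoint T v‖ ≤ ‖ContinuousLinearMap.adjoint T‖ * ‖v‖ :=
          (ContinuousLinearMap.adjoint T).le_opNorm v
    _ ≤ 1 * ‖v‖ := by
        have he : ‖ContinuousLinearMap.adjoint T‖ = ‖T‖ :=
          ContinuousLinearMap.adjoint.norm_map T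
        rw [he]; exact mul_le_mul_of_nonneg_right hTn (norm_nonneg _)
    _ = ‖v‖ := one_mul _
  have hinner : ⟪ContinuousLinearMap.adjoint T v, (starRingEnd ℂ lam) • v⟫
      = (‖v‖ ^ 2 : ℝ) := by
    rw [inner_smul_right, ContinuousLinearMap.adjoint_inner_left, hv, inner_smul_right,
      inner_self_eq_norm_sq_to_K]
    rw [← mul_assoc]
    have : (starRingEnd ℂ lam) * lam = 1 := by
      rw [mul_comm, Complex.mul_conj, Complex.normSq_eq_norm_sq]
      simp [hlam]
    rw [this, one_mul]; norm_cast
  have hz : ‖ContinuousLinearMap.adjoint T v - (starRingEnd ℂ lam) • v‖ ^ 2 ≤ 0 := by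
    rw [@norm_sub_sq ℂ]
    rw [hinner]
    have hre : RCLike.re ((‖v‖ ^ 2 : ℝ) : ℂ) = ‖v‖ ^ 2 := RCLike.ofReal_re _
    rw [hre]
    have hnv : ‖(starRingEnd ℂ lam) • v‖ = ‖v‖ := by
      rw [norm_smul]; simp [hlam]
    rw [hnv]
    nlinarith [h1, norm_nonneg (ContinuousLinearMap.adjoint T v), norm_nonneg v]
  have : ContinuousLinearMap.adjoint T v - (starRingEnd ℂ lam) • v = 0 := by
    have := le_antisymm hz (by positivity)
    have hn : ‖ContinuousLinearMap.adjoint T v - (starRingEnd ℂ lam) • v‖ = 0 := by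
      nlinarith [norm_nonneg (ContinuousLinearMap.adjoint T v - (starRingEnd ℂ lam) • v)]
    exact norm_eq_zero.mp hn
  linear_combination (norm := module) this

/-- If `‖A‖ ≤ 1` and `λ` is an eigenvalue of `A` of modulus one, then every
eigenvector of `A` for `λ` is an eigenvector of `Aᴴ` for `conj λ`; in particular
`ker (A - λI)² = ker (A - λI)`, i.e. `λ` is a semisimple eigenvalue. -/
theorem stmt1 {N : ℕ} (A : Matrix (Fin N) (Fin N) ℂ) (hA : OpNormLeOne A)
    (lam : ℂ) (hlam : ‖lam‖ = 1)
    (heig : ∃ v : Fin N → ℂ, v ≠ 0 ∧ A.mulVec v = lam • v) :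
    (∀ v : Fin N → ℂ, A.mulVec v = lam • v →
      Aᴴ.mulVec v = (starRingEnd ℂ lam) • v) ∧
    (∀ v : Fin N → ℂ,
      (A - lam • (1 : Matrix (Fin N) (Fin N) ℂ)).mulVec
          ((A - lam • (1 : Matrix (Fin N) (Fin N) ℂ)).mulVec v) = 0 →
        (A - lam • (1 : Matrix (Fin N) (Fin N) ℂ)).mulVec v = 0) := by
  classical
  set e : (Fin N → ℂ) ≃ EuclideanSpace ℂ (Fin N) := (WithLp.equiv 2 (Fin N → ℂ)).symm with he
  set T : EuclideanSpace ℂ (Fin N) →L[ℂ] EuclideanSpace ℂ (Fin N) :=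
    Matrix.toEuclideanCLM (𝕜 := ℂ) A with hTdef
  have hTv : ∀ x : Fin N → ℂ, T (e x) = e (A.mulVec x) := by
    intro x
    simp [hTdef, he, Matrix.toLin'_apply]
  have hsmul : ∀ (c : ℂ) (x : Fin N → ℂ), e (c • x) = c • e x := fun c x => rfl
  have hnorm : ∀ x : Fin N → ℂ, ‖e x‖ ^ 2 = enormSq x := fun x => (enormSq_eq x).symm
  have hT : ∀ y : EuclideanSpace ℂ (Fin N), ‖T y‖ ≤ ‖y‖ := by
    intro y
    have hy : e (e.symm y) = y := e.apply_symm_apply y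
    have h2 : ‖T y‖ ^ 2 ≤ ‖y‖ ^ 2 := by
      rw [← hy, hTv, hnorm, hnorm]; exact hA _
    calc ‖T y‖ = Real.sqrt (‖T y‖ ^ 2) := (Real.sqrt_sq (norm_nonneg _)).symm
    _ ≤ Real.sqrt (‖y‖ ^ 2) := Real.sqrt_le_sqrt h2
    _ = ‖y‖ := Real.sqrt_sq (norm_nonneg _)
  have hadj : Matrix.toEuclideanCLM (𝕜 := ℂ) Aᴴ = ContinuousLinearMap.adjoint T := by
    rw [← Matrix.star_eq_conjTranspose, map_star, ← ContinuousLinearMap.star_eq_adjoint, hTdef]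
  have hAH : ∀ v : Fin N → ℂ, ContinuousLinearMap.adjoint T (e v) = e (Aᴴ.mulVec v) := by
    intro v
    rw [← hadj]
    simp [he, Matrix.toLin'_apply]
  have part1 : ∀ v : Fin N → ℂ, A.mulVec v = lam • v →
      Aᴴ.mulVec v = (starRingEnd ℂ lam) • v := by
    intro v hv
    have hev : T (e v) = lam • e v := by rw [hTv, hv, hsmul]
    have := key T hT lam hlam (e v) hev
    rw [hAH, ← hsmul] at this
    exact e.injective this
  refine ⟨part1, ?_⟩
  intro v hv
  set B := A - lam • (1 : Matrix (Fin N) (Fin N) ℂ) with hB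
  have hBmul : ∀ x : Fin N → ℂ, B.mulVec x = A.mulVec x - lam • x := by
    intro x
    rw [hB, Matrix.sub_mulVec, Matrix.smul_mulVec, Matrix.one_mulVec]
  set u := B.mulVec v with hu
  have hAu : A.mulVec u = lam • u := by
    have h2 : A.mulVec u - lam • u = 0 := by rw [← hBmul]; exact hv
    linear_combination (norm := module) h2
  have hAHu : Aᴴ.mulVec u = (starRingEnd ℂ lam) • u := part1 u hAu
  -- now show u = 0 via inner product
  have hsub : ∀ x y : Fin N → ℂ, e (x - y) = e x - e y := fun _ _ => rfl
  have hU : e u = T (e v) - lam • e v := by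
    rw [hu, hBmul, hsub, hsmul, hTv]
  have hadjU : ContinuousLinearMap.adjoint T (e u) = (starRingEnd ℂ lam) • e u := by
    rw [hAH, hAHu, hsmul]
  have hinner : (inner ℂ (e u) (e u) : ℂ) = 0 := by
    calc (inner ℂ (e u) (e u) : ℂ) = inner ℂ (e u) (T (e v) - lam • e v) := by rw [← hU]
    _ = inner ℂ (e u) (T (e v)) - lam * inner ℂ (e u) (e v) := by
        rw [inner_sub_right, inner_smul_right]
    _ = inner ℂ (ContinuousLinearMap.adjoint T (e u)) (e v) - lam * inner ℂ (e u) (e v) := by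
        rw [ContinuousLinearMap.adjoint_inner_left]
    _ = lam * inner ℂ (e u) (e v) - lam * inner ℂ (e u) (e v) := by
        rw [hadjU, inner_smul_left]
        simp
    _ = 0 := sub_self _
  have : e u = 0 := inner_self_eq_zero.mp hinner
  have := congrArg e.symm this
  rw [e.symm_apply_apply] at this
  exact this.trans rfl
end
end

section
/- Let N ≥ 1 and 1 ≤ u ≤ N. Let Λ be a u×u diagonal matrix whose diagonal entries all have modulus 1, let A₁ be an (N−u)×(N−u) matrix with ‖A₁‖ ≤ 1 and spectral radius ρ(A₁) < 1, and let C ∈ ℂ^N. Write z = (z′, z″) ∈ ℂ^u × ℂ^{N−u} and define φ(z) = (Λ z′, A₁ z″)/(⟨z, C⟩ + 1). If ⟨z, C⟩ + 1 ≠ 0 for every z ∈ B_N and φ maps B_N into B_N, then C = 0 (so φ(z′,z″) = (Λz′, A₁z″) is linear). -/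
open Matrix Set Complex

noncomputable section

lemma herm_zero_left {n : Type*} [Fintype n] (y : n → ℂ) : herm 0 y = 0 := by
  simp [herm]

lemma herm_zero_right {n : Type*} [Fintype n] (x : n → ℂ) : herm x 0 = 0 := by
  simp [herm]

lemma herm_smul_left {n : Type*} [Fintype n] (c : ℂ) (x y : n → ℂ) :
    herm (c • x) y = c * herm x y := by
  simp [herm, Finset.mul_sum, mul_assoc]

lemma herm_self {n : Type*} [Fintype n] (x : n → ℂ) : herm x x = (enormSq x : ℂ) := by
  simp only [herm, enormSq, Complex.mul_conj]
  push_cast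
  simp [Complex.normSq_eq_norm_sq]

lemma enormSq_nonneg {n : Type*} [Fintype n] (x : n → ℂ) : 0 ≤ enormSq x :=
  Finset.sum_nonneg fun _ _ => by positivity

lemma enormSq_smul {n : Type*} [Fintype n] (c : ℂ) (x : n → ℂ) :
    enormSq (c • x) = ‖c‖ ^ 2 * enormSq x := by
  simp [enormSq, mul_pow, Finset.mul_sum]

lemma enormSq_zero {n : Type*} [Fintype n] : enormSq (0 : n → ℂ) = 0 := by
  simp [enormSq]

lemma enormSq_pos {n : Type*} [Fintype n] {x : n → ℂ} (hx : x ≠ 0) : 0 < enormSq x := by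
  rcases (enormSq_nonneg x).lt_or_eq with h | h
  · exact h
  · exfalso
    apply hx
    funext j
    have := (Finset.sum_eq_zero_iff_of_nonneg (fun i _ => by positivity)).1 h.symm j
      (Finset.mem_univ j)
    simpa using this

lemma enormSq_diag {n : Type*} [Fintype n] [DecidableEq n] (d : n → ℂ)
    (hd : ∀ i, ‖d i‖ = 1) (x : n → ℂ) :
    enormSq ((Matrix.diagonal d).mulVec x) = enormSq x := by
  simp [enormSq, Matrix.mulVec_diagonal, mul_pow, hd]

lemma enormSq_neg {n : Type*} [Fintype n] (x : n → ℂ) : enormSq (-x) = enormSq x := by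
  simp [enormSq]

lemma enormSq_single {n : Type*} [Fintype n] [DecidableEq n] (i : n) (c : ℂ) :
    enormSq (Pi.single i c) = ‖c‖ ^ 2 := by
  classical
  simp only [enormSq, Pi.single_apply, apply_ite (fun x : ℂ => ‖x‖ ^ 2), norm_zero]
  simp [Finset.sum_ite_eq']

/-- If `Λ` is a diagonal unitary matrix of order `u`, `A₁` has `‖A₁‖ ≤ 1` and
spectral radius `< 1`, and `φ(z) = (Λ z', A₁ z'')/(⟨z, C⟩ + 1)` is a well-defined
self-map of the unit ball `B_N` (`z = (z', z'') ∈ ℂ^u × ℂ^{N-u}`), then `C = 0`. -/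
theorem stmt2 {N u : ℕ} (hN : 1 ≤ N) (hu1 : 1 ≤ u) (huN : u ≤ N)
    (d : Fin u → ℂ) (hd : ∀ i, ‖d i‖ = 1)
    (A₁ : Matrix (Fin (N - u)) (Fin (N - u)) ℂ)
    (hA₁norm : OpNormLeOne A₁)
    (hA₁spec : ∀ μ ∈ spectrum ℂ A₁, ‖μ‖ < 1)
    (C₁ : Fin u → ℂ) (C₂ : Fin (N - u) → ℂ)
    (φ : (Fin u → ℂ) × (Fin (N - u) → ℂ) → (Fin u → ℂ) × (Fin (N - u) → ℂ))
    (hφ : ∀ z, φ z = (herm z.1 C₁ + herm z.2 C₂ + 1)⁻¹ •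
      ((Matrix.diagonal d).mulVec z.1, A₁.mulVec z.2))
    (hden : ∀ z : (Fin u → ℂ) × (Fin (N - u) → ℂ),
      enormSq z.1 + enormSq z.2 < 1 → herm z.1 C₁ + herm z.2 C₂ + 1 ≠ 0)
    (hmaps : ∀ z : (Fin u → ℂ) × (Fin (N - u) → ℂ),
      enormSq z.1 + enormSq z.2 < 1 → enormSq (φ z).1 + enormSq (φ z).2 < 1) :
    C₁ = 0 ∧ C₂ = 0 := by
  have hC1 : C₁ = 0 := by
    by_contra hne
    have hspos : 0 < enormSq C₁ := enormSq_pos hne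
    set s : ℝ := enormSq C₁ with hs
    by_cases hle : s ≤ 1
    · -- use hmaps with z' = -λ • C₁
      set t : ℝ := Real.sqrt s with htdef
      have ht : t ^ 2 = s := Real.sq_sqrt hspos.le
      have htpos : 0 < t := Real.sqrt_pos.2 hspos
      have hts : s ≤ t := by nlinarith
      set lam : ℝ := 1 / (t + s / 2) with hlamdef
      have hlampos : 0 < lam := by positivity
      have hlameq : lam * (t + s / 2) = 1 := by
        rw [hlamdef, one_div, inv_mul_cancel₀ (ne_of_gt (by linarith))]
      set z : (Fin u → ℂ) × (Fin (N - u) → ℂ) := ((-(lam : ℂ)) • C₁, 0) with hz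
      have hz1 : enormSq z.1 = lam ^ 2 * s := by
        rw [hz]
        show enormSq ((-(lam : ℂ)) • C₁) = _
        rw [neg_smul, enormSq_neg, enormSq_smul]
        simp [abs_of_pos hlampos]
        exact Or.inl hs.symm
      have hmem : enormSq z.1 + enormSq z.2 < 1 := by
        rw [hz1]
        have : enormSq z.2 = 0 := by rw [hz]; exact enormSq_zero
        rw [this]
        nlinarith
      have hDval : herm z.1 C₁ + herm z.2 C₂ + 1 = ((1 - lam * s : ℝ) : ℂ) := by
        rw [hz]
        simp only [herm_smul_left, herm_self, herm_zero_left, ← hs]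
        push_cast
        ring
      have hDne := hden z hmem
      have hm := hmaps z hmem
      rw [hφ z, hDval] at hm
      have hz2 : A₁.mulVec z.2 = 0 := by rw [hz]; exact Matrix.mulVec_zero A₁
      rw [show z.2 = (0 : Fin (N-u) → ℂ) from rfl] at hm
      rw [Matrix.mulVec_zero, Prod.smul_mk, smul_zero] at hm
      simp only at hm
      rw [enormSq_smul, enormSq_zero, enormSq_diag d hd] at hm
      rw [show enormSq (-(lam:ℂ) • C₁) = lam ^ 2 * s from hz1] at hm
      rw [hDval] at hDne
      have hr0 : (1 - lam * s : ℝ) ≠ 0 := by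
        intro h; apply hDne; rw [h]; simp
      have hnormD : ‖(((1 - lam * s : ℝ) : ℂ))⁻¹‖ ^ 2 = ((1 - lam * s) ^ 2)⁻¹ := by
        rw [norm_inv, Complex.norm_real, Real.norm_eq_abs, inv_pow, _root_.sq_abs]
      rw [hnormD] at hm
      have hkey : lam ^ 2 * s < (1 - lam * s) ^ 2 := by
        have h2 : (0:ℝ) < (1 - lam * s) ^ 2 := by positivity
        calc lam ^ 2 * s = ((1 - lam * s) ^ 2)⁻¹ * (lam ^ 2 * s) * (1 - lam * s) ^ 2 := by
              field_simp
          _ < 1 * (1 - lam * s) ^ 2 := by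
              apply mul_lt_mul_of_pos_right _ h2
              linarith
          _ = (1 - lam * s) ^ 2 := one_mul _
      -- but (1 - lam*s) = lam*(t - s/2) and (t-s/2)^2 ≤ t^2
      have h1 : 1 - lam * s = lam * (t - s / 2) := by linear_combination -hlameq
      have h2 : (t - s / 2) ^ 2 ≤ t ^ 2 := by
        nlinarith [mul_le_mul_of_nonneg_left hts hspos.le]
      rw [h1, mul_pow] at hkey
      nlinarith [mul_le_mul_of_nonneg_left h2 (sq_nonneg lam)]
    · -- s > 1 : denominator vanishes
      push_neg at hle
      set z : (Fin u → ℂ) × (Fin (N - u) → ℂ) := ((-(s⁻¹ : ℝ) : ℂ) • C₁, 0) with hz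
      have hmem : enormSq z.1 + enormSq z.2 < 1 := by
        have hz1 : enormSq z.1 = (s⁻¹) ^ 2 * s := by
          rw [hz]
          show enormSq ((-(s⁻¹ : ℝ) : ℂ) • C₁) = _
          push_cast
          rw [neg_smul, enormSq_neg, enormSq_smul]
          simp [abs_of_pos (inv_pos.2 hspos), inv_pow]
          exact Or.inl hs.symm
        have hz2 : enormSq z.2 = 0 := by rw [hz]; exact enormSq_zero
        rw [hz1, hz2]
        rw [add_zero]
        rw [inv_pow, inv_mul_lt_iff₀ (by positivity)]
        nlinarith
      apply hden z hmem
      rw [hz]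
      simp only [herm_smul_left, herm_self, herm_zero_left, ← hs]
      have hsne : (s : ℂ) ≠ 0 := by exact_mod_cast hspos.ne'
      push_cast
      field_simp
      ring
  refine ⟨hC1, ?_⟩
  by_contra hne
  have hspos : 0 < enormSq C₂ := enormSq_pos hne
  set s : ℝ := enormSq C₂ with hs
  set eps : ℝ := 1 / (1 + s) with hepsdef
  have hepspos : 0 < eps := by positivity
  have hepseq : eps * (1 + s) = 1 := by rw [hepsdef, one_div, inv_mul_cancel₀ (ne_of_gt (by linarith))]
  set r : ℝ := 1 - eps * s with hrdef
  have hrpos : 0 < r := by nlinarith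
  have i0 : Fin u := ⟨0, hu1⟩
  set z : (Fin u → ℂ) × (Fin (N - u) → ℂ) :=
    (Pi.single i0 (r : ℂ), (-(eps : ℝ) : ℂ) • C₂) with hz
  have hz1 : enormSq z.1 = r ^ 2 := by
    rw [hz]
    simp [enormSq_single, abs_of_pos hrpos]
  have hz2 : enormSq z.2 = eps ^ 2 * s := by
    rw [hz]
    show enormSq ((-(eps : ℝ) : ℂ) • C₂) = _
    push_cast
    rw [neg_smul, enormSq_neg, enormSq_smul]
    simp [abs_of_pos hepspos]
    exact Or.inl hs.symm
  have hmem : enormSq z.1 + enormSq z.2 < 1 := by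
    rw [hz1, hz2, hrdef]
    nlinarith
  have hDval : herm z.1 C₁ + herm z.2 C₂ + 1 = ((r : ℝ) : ℂ) := by
    rw [hz, hC1]
    simp only [herm_zero_right, herm_smul_left, herm_self, ← hs, hrdef]
    push_cast
    ring
  have hm := hmaps z hmem
  rw [hφ z, hDval] at hm
  rw [Prod.smul_mk] at hm
  simp only at hm
  rw [enormSq_smul, enormSq_smul, enormSq_diag d hd] at hm
  rw [show enormSq (Pi.single i0 (r:ℂ)) = r ^ 2 from hz1] at hm
  have hq : 0 ≤ enormSq (A₁ *ᵥ -(eps:ℂ) • C₂) := enormSq_nonneg _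
  have hnormD : ‖((r : ℝ) : ℂ)⁻¹‖ ^ 2 = (r ^ 2)⁻¹ := by
    rw [norm_inv, Complex.norm_real, Real.norm_eq_abs, inv_pow, _root_.sq_abs]
  rw [hnormD] at hm
  have hr2 : (0:ℝ) < r ^ 2 := by positivity
  rw [← mul_add, inv_mul_lt_iff₀ hr2, mul_one] at hm
  nlinarith
end
end

section
/- Let A ∈ ℂ^{n×n} with ‖A‖ ≤ 1, let Q = I − Aᴴ A and P = I − A Aᴴ (both Hermitian positive semi-definite), and let c ∈ ℂ^n. If Aᴴ c lies in the range of Q, i.e. there exists x with Q x = Aᴴ c, then c lies in the range of P, i.e. there exists y with P y = c, and for any such x and y one has xᴴ(Aᴴ c) + |c|² = yᴴ c (both sides being nonnegative reals, independent of the choices of x and y). -/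
open Matrix Set Complex

noncomputable section

section helpers
variable {n : Type*} [Fintype n]

lemma herm_mulVec (M : Matrix n n ℂ) (u v : n → ℂ) :
    herm (M.mulVec u) v = herm u (Mᴴ.mulVec v) := by
  simp only [herm, Matrix.mulVec, dotProduct, Matrix.conjTranspose_apply,
    map_sum, _root_.map_mul, Finset.sum_mul, Finset.mul_sum, RingHomCompTriple.comp_apply,
    RingHom.id_apply]
  rw [Finset.sum_comm]
  apply Finset.sum_congr rfl; intro k _
  apply Finset.sum_congr rfl; intro j _
  rw [show ((starRingEnd ℂ) (star (M j k))) = M j k by rw [← starRingEnd_apply, starRingEnd_self_apply]]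
  ring

lemma herm_sub_right (u v w : n → ℂ) : herm u (v - w) = herm u v - herm u w := by
  simp [herm, mul_sub, Finset.sum_sub_distrib]

lemma herm_add_right (u v w : n → ℂ) : herm u (v + w) = herm u v + herm u w := by
  simp [herm, mul_add, Finset.sum_add_distrib]

lemma herm_sub_left (u v w : n → ℂ) : herm (u - v) w = herm u w - herm v w := by
  simp [herm, sub_mul, Finset.sum_sub_distrib]

lemma herm_self_s5 (u : n → ℂ) : herm u u = ((∑ j, ‖u j‖ ^ 2 : ℝ) : ℂ) := by
  simp only [herm]
  push_cast
  apply Finset.sum_congr rfl; intro j _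
  rw [Complex.mul_conj]
  norm_cast
  rw [Complex.sq_norm]

end helpers

/-- Let `‖A‖ ≤ 1`, `Q = I - Aᴴ A`, `P = I - A Aᴴ`. If `Aᴴ c` is in the range of
`Q`, then `c` is in the range of `P`, and `xᴴ (Aᴴ c) + |c|² = yᴴ c` for any `x`, `y`
with `Q x = Aᴴ c` and `P y = c`, both sides being nonnegative reals. -/
theorem stmt5 {n : ℕ} (A : Matrix (Fin n) (Fin n) ℂ) (hA : OpNormLeOne A)
    (c : Fin n → ℂ)
    (hx : ∃ x : Fin n → ℂ,
      ((1 : Matrix (Fin n) (Fin n) ℂ) - Aᴴ * A).mulVec x = Aᴴ.mulVec c) :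
    (∃ y : Fin n → ℂ, ((1 : Matrix (Fin n) (Fin n) ℂ) - A * Aᴴ).mulVec y = c) ∧
    ∀ x y : Fin n → ℂ,
      ((1 : Matrix (Fin n) (Fin n) ℂ) - Aᴴ * A).mulVec x = Aᴴ.mulVec c →
      ((1 : Matrix (Fin n) (Fin n) ℂ) - A * Aᴴ).mulVec y = c →
      herm (Aᴴ.mulVec c) x + (enormSq c : ℂ) = herm c y ∧
      (herm c y).im = 0 ∧ 0 ≤ (herm c y).re := by
  obtain ⟨x₀, hx₀⟩ := hx
  have hQH : ((1 : Matrix (Fin n) (Fin n) ℂ) - Aᴴ * A)ᴴ = 1 - Aᴴ * A := by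
    simp [Matrix.conjTranspose_sub, Matrix.conjTranspose_mul]
  have hPH : ((1 : Matrix (Fin n) (Fin n) ℂ) - A * Aᴴ)ᴴ = 1 - A * Aᴴ := by
    simp [Matrix.conjTranspose_sub, Matrix.conjTranspose_mul]
  -- A x₀ facts
  have hAAx : (Aᴴ * A).mulVec x₀ = x₀ - Aᴴ.mulVec c := by
    rw [Matrix.sub_mulVec, Matrix.one_mulVec] at hx₀
    rw [← hx₀]; abel
  set y₀ : Fin n → ℂ := c + A.mulVec x₀ with hy₀def
  have hy₀ : ((1 : Matrix (Fin n) (Fin n) ℂ) - A * Aᴴ).mulVec y₀ = c := by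
    have key : (A * Aᴴ).mulVec (A.mulVec x₀) = A.mulVec x₀ - (A * Aᴴ).mulVec c := by
      rw [Matrix.mulVec_mulVec, show A * Aᴴ * A = A * (Aᴴ * A) by rw [Matrix.mul_assoc],
        ← Matrix.mulVec_mulVec, hAAx, Matrix.mulVec_sub, Matrix.mulVec_mulVec]
    rw [Matrix.sub_mulVec, Matrix.one_mulVec, hy₀def, Matrix.mulVec_add, key]
    abel
  -- the key value
  set K : ℂ := herm (Aᴴ.mulVec c) x₀ with hK
  have hKreal : K = ((enormSq x₀ - enormSq (A.mulVec x₀) : ℝ) : ℂ) := by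
    rw [hK, ← hx₀, Matrix.sub_mulVec, Matrix.one_mulVec, herm_sub_left,
      ← Matrix.mulVec_mulVec, herm_mulVec Aᴴ, Matrix.conjTranspose_conjTranspose,
      herm_self_s5, herm_self_s5]
    push_cast [enormSq]
    ring
  -- independence in x
  have hxind : ∀ x : Fin n → ℂ,
      ((1 : Matrix (Fin n) (Fin n) ℂ) - Aᴴ * A).mulVec x = Aᴴ.mulVec c →
      herm (Aᴴ.mulVec c) x = K := by
    intro x hxe
    have h0 : herm (Aᴴ.mulVec c) (x - x₀) = 0 := by
      rw [← hxe, herm_mulVec, hQH, Matrix.mulVec_sub, hxe, hx₀, sub_self]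
      simp [herm]
    have := herm_sub_right (Aᴴ.mulVec c) x x₀
    rw [h0] at this
    rw [hK, ← sub_eq_zero, this]
  -- independence in y
  have hyind : ∀ y : Fin n → ℂ,
      ((1 : Matrix (Fin n) (Fin n) ℂ) - A * Aᴴ).mulVec y = c →
      herm c y = herm c y₀ := by
    intro y hye
    have h0 : herm c (y - y₀) = 0 := by
      rw [← hye, herm_mulVec, hPH, Matrix.mulVec_sub, hye, hy₀, sub_self]
      simp [herm]
    have := herm_sub_right c y y₀
    rw [h0] at this
    rw [← sub_eq_zero, this]
  have hy₀val : herm c y₀ = (enormSq c : ℂ) + K := by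
    rw [hy₀def, herm_add_right, herm_self_s5, hK, herm_mulVec Aᴴ,
      Matrix.conjTranspose_conjTranspose]
    rfl
  refine ⟨⟨y₀, hy₀⟩, ?_⟩
  intro x y hxe hye
  have hval : herm c y = (enormSq c : ℂ) + K := by rw [hyind y hye, hy₀val]
  refine ⟨by rw [hxind x hxe, hval]; ring, ?_, ?_⟩
  · rw [hval, hKreal]; push_cast; simp
  · rw [hval, hKreal]
    push_cast
    simp only [Complex.add_re, Complex.ofReal_re, Complex.sub_re]
    have h1 : 0 ≤ enormSq c := Finset.sum_nonneg fun j _ => by positivity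
    have h2 := hA x₀
    norm_num
    linarith
end
end

section
/- For all real numbers u > 0, v ≥ 0 and t > 0 one has (1 + e^{−2tu} − 2 e^{−tu} cos(vt)) / ((1 − e^{−2tu})·t) ≤ (u² + v²)/(2u), and the left-hand side tends to (u² + v²)/(2u) as t → 0⁺. -/
open Set Filter

noncomputable section

-- Lemma A: 2(1 - e^{-x}) ≤ x(1 + e^{-x}) for x ≥ 0
lemma lemA (x : ℝ) (hx : 0 ≤ x) : 2 * (1 - Real.exp (-x)) ≤ x * (1 + Real.exp (-x)) := by
  set g : ℝ → ℝ := fun z => z * (1 + Real.exp (-z)) - 2 * (1 - Real.exp (-z)) with hg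
  have hderiv : ∀ y : ℝ, HasDerivAt g (1 - (1 + y) * Real.exp (-y)) y := by
    intro y
    have h1 : HasDerivAt (fun z : ℝ => -z) (-1) y := (hasDerivAt_id y).neg
    have h2 := h1.exp
    have h3 := ((hasDerivAt_id y).mul ((hasDerivAt_const y (1:ℝ)).add h2)).sub
      (((hasDerivAt_const y (1:ℝ)).sub h2).const_mul 2)
    refine h3.congr_deriv ?_
    simp only [id, Pi.add_apply]
    ring
  have hmono : MonotoneOn g (Ici 0) := by
    refine monotoneOn_of_deriv_nonneg (convex_Ici 0) ?_ ?_ ?_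
    · exact (Continuous.continuousOn (by continuity))
    · intro y hy
      exact (hderiv y).differentiableAt.differentiableWithinAt
    · intro y hy
      rw [(hderiv y).deriv]
      have h4 : (1 + y) * Real.exp (-y) ≤ 1 := by
        have h5 := Real.add_one_le_exp y
        have h6 : Real.exp y * Real.exp (-y) = 1 := by
          rw [← Real.exp_add]; simp
        nlinarith [Real.exp_pos (-y)]
      linarith
  have h0 : g 0 ≤ g x := hmono (by simp) (by simpa using hx) hx
  have : g 0 = 0 := by simp [hg]
  simp only [hg, neg_zero, Real.exp_zero] at h0
  linarith

-- Lemma B: 2 x e^{-x} ≤ 1 - (e^{-x})² for x ≥ 0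
lemma lemB (x : ℝ) (hx : 0 ≤ x) : 2 * x * Real.exp (-x) ≤ 1 - Real.exp (-x) ^ 2 := by
  have h1 : x ≤ Real.sinh x := by
    rcases eq_or_lt_of_le hx with rfl | h
    · simp
    · exact (Real.self_lt_sinh_iff.mpr h).le
  rw [Real.sinh_eq] at h1
  have h6 : Real.exp x * Real.exp (-x) = 1 := by rw [← Real.exp_add]; simp
  nlinarith [Real.exp_pos (-x), mul_le_mul_of_nonneg_right h1 (Real.exp_pos (-x)).le]

/-- For `u > 0`, `v ≥ 0`, the function
`h(t) = (1 + e^{-2tu} - 2 e^{-tu} cos(vt)) / ((1 - e^{-2tu}) t)` satisfies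
`h(t) ≤ (u² + v²)/(2u)` for all `t > 0`, and `h(t) → (u² + v²)/(2u)` as `t → 0⁺`. -/
theorem stmt9 (u v : ℝ) (hu : 0 < u) (hv : 0 ≤ v) :
    (∀ t : ℝ, 0 < t →
      (1 + Real.exp (-2 * t * u) - 2 * Real.exp (-t * u) * Real.cos (v * t)) /
        ((1 - Real.exp (-2 * t * u)) * t) ≤ (u ^ 2 + v ^ 2) / (2 * u)) ∧
    Tendsto (fun t : ℝ =>
      (1 + Real.exp (-2 * t * u) - 2 * Real.exp (-t * u) * Real.cos (v * t)) /
        ((1 - Real.exp (-2 * t * u)) * t))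
      (nhdsWithin 0 (Ioi 0)) (nhds ((u ^ 2 + v ^ 2) / (2 * u))) := by
  constructor
  · intro t ht
    have hE1 : Real.exp (-t * u) = Real.exp (-(t*u)) := by ring_nf
    have hE2 : Real.exp (-2 * t * u) = Real.exp (-(t*u)) ^ 2 := by
      rw [← Real.exp_nat_mul]
      ring_nf
    set a := Real.exp (-(t*u)) with ha
    set s := Real.sin (v*t/2) with hs
    have hcos : Real.cos (v*t) = 1 - 2*s^2 := by
      have h3 : v * t = 2 * (v*t/2) := by ring
      rw [h3, Real.cos_two_mul]
      have := Real.sin_sq_add_cos_sq (v*t/2)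
      linarith
    rw [hE1, hE2, hcos]
    have ha0 : 0 < a := Real.exp_pos _
    have ha1 : a < 1 := Real.exp_lt_one_iff.mpr (by nlinarith)
    have ha2 : a^2 < 1 := by nlinarith [mul_pos ha0 ha0]
    have hden : 0 < (1 - a^2) * t := mul_pos (by linarith) ht
    rw [div_le_div_iff₀ hden (by positivity)]
    have FA := lemA (t*u) (by positivity)
    have FB := lemB (t*u) (by positivity)
    rw [← ha] at FA FB
    have hs2 : s^2 ≤ (v*t/2)^2 := Real.sin_sq_le_sq
    have h1 := mul_le_mul_of_nonneg_left FA (by nlinarith : (0:ℝ) ≤ u * (1-a))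
    have h2 := mul_le_mul_of_nonneg_left FB (by positivity : (0:ℝ) ≤ v^2 * t)
    have h3 := mul_le_mul_of_nonneg_left hs2 (by positivity : (0:ℝ) ≤ 8*u*a)
    nlinarith [h1, h2, h3]
  ·
    have m : nhdsWithin (0:ℝ) (Ioi 0) ≤ nhdsWithin 0 {0}ᶜ :=
      nhdsWithin_mono 0 (fun x hx => ne_of_gt hx)
    -- derivative facts
    have hA : HasDerivAt (fun t : ℝ => 1 - Real.exp (-t * u)) u 0 := by
      have h1 : HasDerivAt (fun t : ℝ => -t * u) (-u) 0 := by
        simpa using ((hasDerivAt_id (0:ℝ)).neg.mul_const u)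
      have h2 := h1.exp
      have h3 := (hasDerivAt_const (0:ℝ) (1:ℝ)).sub h2
      exact h3.congr_deriv (by simp)
    have hC : HasDerivAt (fun t : ℝ => 1 - Real.exp (-2 * t * u)) (2*u) 0 := by
      have h1 : HasDerivAt (fun t : ℝ => -2 * t * u) (-2*u) 0 := by
        simpa using (((hasDerivAt_id (0:ℝ)).const_mul (-2:ℝ)).mul_const u)
      have h2 := h1.exp
      have h3 := (hasDerivAt_const (0:ℝ) (1:ℝ)).sub h2
      exact h3.congr_deriv (by simp)
    have hB : HasDerivAt (fun t : ℝ => Real.sin (v * t / 2)) (v/2) 0 := by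
      have h1 : HasDerivAt (fun t : ℝ => v * t / 2) (v/2) 0 := by
        simpa using (((hasDerivAt_id (0:ℝ)).const_mul v).div_const 2)
      have h2 := h1.sin
      simpa using h2
    have l1 : Tendsto (fun t : ℝ => (1 - Real.exp (-t * u)) / t)
        (nhdsWithin 0 (Ioi 0)) (nhds u) := by
      have h := hasDerivAt_iff_tendsto_slope.mp hA
      refine (h.mono_left m).congr fun t => ?_
      simp [slope_def_field]
    have l2 : Tendsto (fun t : ℝ => Real.sin (v * t / 2) / t)
        (nhdsWithin 0 (Ioi 0)) (nhds (v/2)) := by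
      have h := hasDerivAt_iff_tendsto_slope.mp hB
      refine (h.mono_left m).congr fun t => ?_
      simp [slope_def_field]
    have l3 : Tendsto (fun t : ℝ => (1 - Real.exp (-2 * t * u)) / t)
        (nhdsWithin 0 (Ioi 0)) (nhds (2*u)) := by
      have h := hasDerivAt_iff_tendsto_slope.mp hC
      refine (h.mono_left m).congr fun t => ?_
      simp [slope_def_field]
    have l4 : Tendsto (fun t : ℝ => Real.exp (-t * u)) (nhdsWithin 0 (Ioi 0)) (nhds 1) := by
      have : ContinuousAt (fun t : ℝ => Real.exp (-t * u)) 0 := by fun_prop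
      have h := this.tendsto
      simp only [neg_zero, zero_mul, Real.exp_zero] at h
      exact h.mono_left nhdsWithin_le_nhds
    have lG : Tendsto (fun t : ℝ =>
        ((1 - Real.exp (-t * u)) / t)^2 + 4 * Real.exp (-t * u) * (Real.sin (v * t / 2) / t)^2)
        (nhdsWithin 0 (Ioi 0)) (nhds (u^2 + v^2)) := by
      have h1 := (l1.pow 2).add (((tendsto_const_nhds (x := (4:ℝ))).mul l4).mul (l2.pow 2))
      convert h1 using 2
      ring
    have lH := lG.div l3 (by positivity)
    refine lH.congr' ?_
    filter_upwards [self_mem_nhdsWithin] with t ht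
    have ht0 : (0:ℝ) < t := ht
    have hE2 : Real.exp (-2 * t * u) = Real.exp (-t * u) ^ 2 := by
      rw [← Real.exp_nat_mul]; ring_nf
    have hcos : Real.cos (v*t) = 1 - 2 * Real.sin (v*t/2) ^ 2 := by
      have h4 := Real.cos_two_mul (v*t/2)
      rw [show 2*(v*t/2) = v*t by ring] at h4
      have := Real.sin_sq_add_cos_sq (v*t/2)
      linarith
    simp only [Pi.div_apply]
    rw [hE2, hcos]
    have key : ∀ (τ E σ : ℝ), τ ≠ 0 → 1 - E^2 ≠ 0 →
        (((1-E)/τ)^2 + 4*E*(σ/τ)^2) / ((1-E^2)/τ) = (1 + E^2 - 2*E*(1-2*σ^2)) / ((1-E^2)*τ) := by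
      intro τ E σ hτ hE
      field_simp
      ring
    have htne : t ≠ 0 := ne_of_gt ht0
    have ha1 : Real.exp (-t*u) < 1 := Real.exp_lt_one_iff.mpr (by nlinarith)
    have hne : 1 - Real.exp (-t*u)^2 ≠ 0 := by nlinarith [Real.exp_pos (-t*u)]
    exact key t (Real.exp (-t*u)) (Real.sin (v*t/2)) htne hne
end
end

section
/- Let N = 1 + p + q + r and write points of ℂ^N as (z, u, v, w) ∈ ℂ × ℂ^p × ℂ^q × ℂ^r, so that ℍ^N = {(z,u,v,w) : Im z > |u|² + |v|² + |w|²}. Let A = diag(λ₁, …, λ_r) with λ_j = exp(−u_j + i v_j), u_j > 0, v_j ≥ 0 (so |λ_j| < 1), let b ∈ ℂ and c = (c₁, …, c_r) ∈ ℂ^r, and assume ψ(z,u,v,w) = (z + 2i⟨w, c⟩ + b, u, v, A w) is a self-map of ℍ^N. If Im(b) ≥ Σ_{j=1}^{r} (u_j² + v_j²)/(2 u_j |1 − λ_j|²) · |c_j|², then ψ can be embedded into a semigroup of holomorphic self-maps of ℍ^N. -/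
open Matrix Set Complex Filter

noncomputable section

/-- `(φ t)_{t ≥ 0}` is a (continuous) semigroup of holomorphic self-maps of `U`. -/
def IsHolSemigroupOn {E : Type*} [NormedAddCommGroup E] [NormedSpace ℂ E]
    (U : Set E) (φ : ℝ → E → E) : Prop :=
  (∀ t : ℝ, 0 ≤ t → MapsTo (φ t) U U) ∧
  (∀ t : ℝ, 0 ≤ t → DifferentiableOn ℂ (φ t) U) ∧
  (∀ z ∈ U, φ 0 z = z) ∧
  (∀ s : ℝ, 0 ≤ s → ∀ t : ℝ, 0 ≤ t → ∀ z ∈ U, φ (s + t) z = φ s (φ t z)) ∧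
  (∀ K : Set E, K ⊆ U → IsCompact K →
    TendstoUniformlyOn (fun t => φ t) id (nhdsWithin 0 (Ioi 0)) K)

/-- `ℂ^N = ℂ × ℂ^p × ℂ^q × ℂ^r`. -/
abbrev E4 (p q r : ℕ) : Type := ℂ × (Fin p → ℂ) × (Fin q → ℂ) × (Fin r → ℂ)

/-- The Siegel half-plane `ℍ^N = {(z,u,v,w) : Im z > |u|² + |v|² + |w|²}`. -/
def Siegel4 (p q r : ℕ) : Set (E4 p q r) :=
  {x | enormSq x.2.1 + enormSq x.2.2.1 + enormSq x.2.2.2 < x.1.im}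

lemma auxL1 (s : ℝ) (hs : 0 ≤ s) : 2*(1 - Real.exp (-s)) ≤ s * (1 + Real.exp (-s)) := by
  have key : ∀ y : ℝ, 0 ≤ y → Real.sinh y ≤ y * Real.cosh y := by
    intro y hy
    have hmono : MonotoneOn (fun x => x * Real.cosh x - Real.sinh x) (Set.Ici (0:ℝ)) := by
      apply monotoneOn_of_deriv_nonneg (convex_Ici 0)
      · fun_prop
      · apply Differentiable.differentiableOn; fun_prop
      · intro x hx
        have h1 : HasDerivAt (fun x : ℝ => x * Real.cosh x - Real.sinh x)
            (1 * Real.cosh x + x * Real.sinh x - Real.cosh x) x :=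
          ((hasDerivAt_id x).mul (Real.hasDerivAt_cosh x)).sub (Real.hasDerivAt_sinh x)
        rw [h1.deriv]
        rw [interior_Ici, Set.mem_Ioi] at hx
        have := Real.sinh_pos_iff.2 hx
        nlinarith
    have := hmono (Set.self_mem_Ici) (Set.mem_Ici.2 hy) hy
    simp at this
    linarith
  have h := key (s/2) (by linarith)
  rw [Real.sinh_eq, Real.cosh_eq] at h
  have h2 : Real.exp (-s) = Real.exp (-(s/2)) * Real.exp (-(s/2)) := by
    rw [← Real.exp_add]; ring_nf
  have h3 : Real.exp (s/2) * Real.exp (-(s/2)) = 1 := by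
    rw [← Real.exp_add]; simp
  have h4 : 0 < Real.exp (-(s/2)) := Real.exp_pos _
  nlinarith [Real.exp_pos (s/2)]

lemma auxL2 (s : ℝ) (hs : 0 ≤ s) : 2*s*Real.exp (-s) ≤ 1 - Real.exp (-(2*s)) := by
  have h := Real.self_le_sinh_iff.2 hs
  rw [Real.sinh_eq] at h
  have h2 : Real.exp (-(2*s)) = Real.exp (-s) * Real.exp (-s) := by
    rw [← Real.exp_add]; ring_nf
  have h3 : Real.exp s * Real.exp (-s) = 1 := by rw [← Real.exp_add]; simp
  have h4 : 0 < Real.exp (-s) := Real.exp_pos _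
  nlinarith

lemma coreIneq (u v t : ℝ) (hu : 0 < u) (hv : 0 ≤ v) (ht : 0 < t) :
    ‖1 - Complex.exp ((t:ℂ) * (-(u:ℂ) + (v:ℂ)*Complex.I))‖^2
      ≤ t * ((u^2+v^2)/(2*u)) * (1 - Real.exp (-(2*(t*u)))) := by
  set z : ℂ := (t:ℂ) * (-(u:ℂ) + (v:ℂ)*Complex.I) with hz
  have hre : z.re = -(t*u) := by simp [hz]
  have him : z.im = t*v := by simp [hz]
  set s := t*u with hs
  set θ := t*v with hθ
  have hs0 : 0 < s := mul_pos ht hu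
  have hθ0 : 0 ≤ θ := mul_nonneg ht.le hv
  have hnorm : ‖1 - Complex.exp z‖^2
      = 1 - 2*Real.exp (-s)*Real.cos θ + Real.exp (-s)*Real.exp (-s) := by
    rw [Complex.sq_norm, Complex.normSq_apply]
    simp [Complex.exp_re, Complex.exp_im, hre, him]
    nlinarith [Real.sin_sq_add_cos_sq θ]
  rw [hnorm]
  have hcos : 1 - θ^2/2 ≤ Real.cos θ := Real.one_sub_sq_div_two_le_cos
  have hL1 := auxL1 s hs0.le
  have hL2 := auxL2 s hs0.le
  have hexp : Real.exp (-(2*s)) = Real.exp (-s) * Real.exp (-s) := by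
    rw [← Real.exp_add]; ring_nf
  rw [hexp] at hL2
  have he : 0 < Real.exp (-s) := Real.exp_pos _
  have hE1 : Real.exp (-s) ≤ 1 := Real.exp_le_one_iff.2 (by linarith)
  have hrhs : t * ((u^2+v^2)/(2*u)) * (1 - Real.exp (-(2*(t*u))))
      = (s^2 + θ^2) * (1 - Real.exp (-s)*Real.exp (-s)) / (2*s) := by
    rw [hexp, hs, hθ]
    field_simp
  rw [hrhs, le_div_iff₀ (by linarith : (0:ℝ) < 2*s)]
  set E := Real.exp (-s)
  nlinarith [mul_nonneg hθ0 hθ0, sq_nonneg (1-E),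
    mul_le_mul_of_nonneg_right hL1 (sub_nonneg.2 hE1),
    mul_le_mul_of_nonneg_left hL2 (mul_nonneg hθ0 hθ0),
    mul_le_mul_of_nonneg_left hcos (by positivity : (0:ℝ) ≤ 2*s*E)]

-- per-coordinate self-map estimate
lemma stepj (u v t : ℝ) (hu : 0 < u) (hv : 0 ≤ v) (ht : 0 < t) (cj w : ℂ) :
    ‖Complex.exp ((t:ℂ)*(-(u:ℂ)+(v:ℂ)*Complex.I)) * w‖^2
      ≤ ‖w‖^2
        + 2*(w * (starRingEnd ℂ) (cj * (1 - Complex.exp ((t:ℂ)*(-(u:ℂ)-(v:ℂ)*Complex.I)))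
              / (1 - Complex.exp (-(u:ℂ)-(v:ℂ)*Complex.I)))).re
        + t * ((u^2+v^2)/(2*u*‖1 - Complex.exp (-(u:ℂ)+(v:ℂ)*Complex.I)‖^2) * ‖cj‖^2) := by
  set α : ℂ := -(u:ℂ)+(v:ℂ)*Complex.I with hα
  set m : ℂ := -(u:ℂ)-(v:ℂ)*Complex.I with hm
  have hconj : (starRingEnd ℂ) α = m := by
    simp [hα, hm, Complex.ext_iff]
  have hconjt : ∀ τ : ℝ, ((1:ℂ) - Complex.exp ((τ:ℂ)*m))
      = (starRingEnd ℂ) (1 - Complex.exp ((τ:ℂ)*α)) := by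
    intro τ
    rw [map_sub, _root_.map_one, ← Complex.exp_conj, _root_.map_mul, Complex.conj_ofReal, hconj]
  have hnt : ‖(1:ℂ) - Complex.exp ((t:ℂ)*m)‖ = ‖(1:ℂ) - Complex.exp ((t:ℂ)*α)‖ := by
    rw [hconjt t, RCLike.norm_conj]
  have hn1 : ‖(1:ℂ) - Complex.exp m‖ = ‖(1:ℂ) - Complex.exp α‖ := by
    have := hconjt 1
    simp only [Complex.ofReal_one, one_mul] at this
    rw [this, RCLike.norm_conj]
  have hExpNorm : ‖Complex.exp ((t:ℂ)*α)‖ = Real.exp (-(t*u)) := by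
    rw [Complex.norm_exp]
    congr 1
    simp [hα]
  have hden0 : ‖(1:ℂ) - Complex.exp α‖ ≠ 0 := by
    rw [norm_ne_zero_iff, sub_ne_zero]
    intro h
    have h1 : ‖Complex.exp α‖ = Real.exp (-u) := by
      rw [Complex.norm_exp]; congr 1; simp [hα]
    rw [← h] at h1
    simp at h1
    have : Real.exp (-u) < 1 := Real.exp_lt_one_iff.2 (by linarith)
    rw [← h1] at this
    exact lt_irrefl _ this
  set ctj : ℂ := cj * (1 - Complex.exp ((t:ℂ)*m)) / (1 - Complex.exp m) with hctj
  set W := ‖w‖ with hW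
  set C := ‖ctj‖ with hC
  have hRe : -(W*C) ≤ (w * (starRingEnd ℂ) ctj).re := by
    have h1 : |(w * (starRingEnd ℂ) ctj).re| ≤ ‖w * (starRingEnd ℂ) ctj‖ :=
      Complex.abs_re_le_norm _
    have h2 : ‖w * (starRingEnd ℂ) ctj‖ = W * C := by
      rw [norm_mul, RCLike.norm_conj]
    rw [h2] at h1
    linarith [neg_abs_le (w * (starRingEnd ℂ) ctj).re]
  have hCval : C^2 = ‖cj‖^2 * ‖(1:ℂ) - Complex.exp ((t:ℂ)*α)‖^2 / ‖(1:ℂ) - Complex.exp α‖^2 := by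
    rw [hC, hctj, norm_div, norm_mul, hnt, hn1]
    field_simp
  have hcore := coreIneq u v t hu hv ht
  set E2 := Real.exp (-(2*(t*u))) with hE2def
  have hE2lt : E2 < 1 := Real.exp_lt_one_iff.2 (by nlinarith)
  have hE2pos : 0 < E2 := Real.exp_pos _
  have hlhs : ‖Complex.exp ((t:ℂ)*α) * w‖^2 = E2 * W^2 := by
    rw [norm_mul, hExpNorm, mul_pow, pow_two (Real.exp (-(t*u))), ← Real.exp_add]
    rw [hE2def]
    congr 2
    ring
  set B := t * ((u^2+v^2)/(2*u*‖(1:ℂ) - Complex.exp α‖^2) * ‖cj‖^2) with hB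
  have hβ : C^2 ≤ (1-E2) * B := by
    rw [hCval, hB]
    set N := ‖(1:ℂ) - Complex.exp α‖^2 with hNdef
    have hN : (0:ℝ) < N := by rw [hNdef]; positivity
    rw [div_le_iff₀ hN]
    calc ‖cj‖^2 * ‖(1:ℂ) - Complex.exp ((t:ℂ)*α)‖^2
        ≤ ‖cj‖^2 * (t * ((u^2+v^2)/(2*u)) * (1 - E2)) :=
          mul_le_mul_of_nonneg_left hcore (by positivity)
      _ = (1-E2) * (t * ((u^2+v^2)/(2*u*N) * ‖cj‖^2)) * N := by
          field_simp
  -- final algebra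
  rw [hlhs]
  have hBnn : 0 ≤ B := by
    rw [hB]; positivity
  have ha : 0 < 1 - E2 := by linarith
  nlinarith [sq_nonneg ((1-E2)*W - C), mul_nonneg (norm_nonneg w) (norm_nonneg ctj),
    mul_le_mul_of_nonneg_left hRe (le_of_lt ha)]

set_option maxHeartbeats 2000000 in
/-- Let `ψ(z,u,v,w) = (z + 2i⟨w,c⟩ + b, u, v, Aw)` be a parabolic self-map of
`ℍ^N` with `A = diag(λ₁, …, λ_r)`, `λ_j = exp(-u_j + i v_j)`, `u_j > 0`, `v_j ≥ 0`.
If `Im b ≥ ∑_j (u_j² + v_j²)/(2 u_j |1 - λ_j|²) |c_j|²`, then `ψ` embeds into a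
semigroup of holomorphic self-maps of `ℍ^N`. -/
theorem stmt10 {p q r : ℕ} (uu vv : Fin r → ℝ)
    (huu : ∀ j, 0 < uu j) (hvv : ∀ j, 0 ≤ vv j)
    (d : Fin r → ℂ)
    (hd : ∀ j, d j = Complex.exp (-(uu j : ℂ) + (vv j : ℂ) * Complex.I))
    (b : ℂ) (c : Fin r → ℂ)
    (ψ : E4 p q r → E4 p q r)
    (hψ : ∀ x, ψ x = (x.1 + 2 * Complex.I * herm x.2.2.2 c + b,
      x.2.1, x.2.2.1, (Matrix.diagonal d).mulVec x.2.2.2))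
    (hself : MapsTo ψ (Siegel4 p q r) (Siegel4 p q r))
    (hb : b.im ≥ ∑ j : Fin r,
      (uu j ^ 2 + vv j ^ 2) / (2 * uu j * ‖1 - d j‖ ^ 2) * ‖c j‖ ^ 2) :
    ∃ φt : ℝ → E4 p q r → E4 p q r,
      IsHolSemigroupOn (Siegel4 p q r) φt ∧ ∀ z ∈ Siegel4 p q r, φt 1 z = ψ z := by
  classical
  set α : Fin r → ℂ := fun j => -(uu j : ℂ) + (vv j : ℂ)*Complex.I with hαdef
  set m : Fin r → ℂ := fun j => -(uu j : ℂ) - (vv j : ℂ)*Complex.I with hmdef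
  set ct : ℝ → Fin r → ℂ :=
    fun t j => c j * (1 - Complex.exp ((t:ℂ) * m j)) / (1 - Complex.exp (m j)) with hct
  set φ : ℝ → E4 p q r → E4 p q r := fun t x =>
    (x.1 + 2*Complex.I*herm x.2.2.2 (ct t) + (t:ℂ)*b, x.2.1, x.2.2.1,
      fun j => Complex.exp ((t:ℂ)*(α j)) * x.2.2.2 j) with hφ
  -- basic facts
  have hdexp : ∀ j, d j = Complex.exp (α j) := fun j => hd j
  have hconjm : ∀ j, (starRingEnd ℂ) (α j) = m j := fun j => by
    simp [hαdef, hmdef, Complex.ext_iff]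
  have hconjm' : ∀ j, (starRingEnd ℂ) (m j) = α j := fun j => by
    simp [hαdef, hmdef, Complex.ext_iff]
  have hm1 : ∀ j, (1:ℂ) - Complex.exp (m j) ≠ 0 := by
    intro j
    rw [sub_ne_zero]
    intro h
    have h1 : ‖Complex.exp (m j)‖ = Real.exp (-(uu j)) := by
      rw [Complex.norm_exp]
      congr 1
      simp [hmdef]
    rw [← h] at h1
    simp at h1
    have := huu j
    have h2 : Real.exp (-(uu j)) < 1 := Real.exp_lt_one_iff.2 (by linarith)
    rw [← h1] at h2
    exact lt_irrefl _ h2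
  have hid0 : ∀ x : E4 p q r, φ 0 x = x := by
    intro x
    simp only [hφ, hct]
    have : herm x.2.2.2 (fun j => c j * (1 - Complex.exp (((0:ℝ):ℂ) * m j)) / (1 - Complex.exp (m j))) = 0 := by
      simp [herm]
    rw [this]
    simp
  -- the cocycle identity for ct
  have hctadd : ∀ (s t : ℝ) (j : Fin r),
      ct (s+t) j = ct t j + Complex.exp ((t:ℂ)*m j) * ct s j := by
    intro s t j
    simp only [hct]
    have hst : ((s+t:ℝ):ℂ) * m j = (s:ℂ)*m j + (t:ℂ)*m j := by push_cast; ring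
    rw [hst, Complex.exp_add]
    field_simp
    ring
  refine ⟨φ, ⟨?_, ?_, fun z _ => hid0 z, ?_, ?_⟩, ?_⟩
  · -- MapsTo
    intro t ht x hx
    rcases eq_or_lt_of_le ht with h0 | hpos
    · rw [← h0, hid0 x]; exact hx
    · simp only [Siegel4, mem_setOf_eq] at hx ⊢
      show enormSq x.2.1 + enormSq x.2.2.1
          + enormSq (fun j => Complex.exp ((t:ℂ)*(α j)) * x.2.2.2 j)
          < (x.1 + 2*Complex.I*herm x.2.2.2 (ct t) + (t:ℂ)*b).im
      have him : (x.1 + 2*Complex.I*herm x.2.2.2 (ct t) + (t:ℂ)*b).im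
          = x.1.im + 2*(herm x.2.2.2 (ct t)).re + t*b.im := by
        simp [Complex.add_im, Complex.mul_im, Complex.mul_re]
      rw [him]
      have hsum : ∀ j ∈ Finset.univ, ‖Complex.exp ((t:ℂ)*(α j)) * x.2.2.2 j‖^2
          ≤ ‖x.2.2.2 j‖^2 + 2*(x.2.2.2 j * (starRingEnd ℂ) (ct t j)).re
            + t * ((uu j^2+vv j^2)/(2*uu j*‖1 - d j‖^2) * ‖c j‖^2) := by
        intro j _
        have h := stepj (uu j) (vv j) t (huu j) (hvv j) hpos (c j) (x.2.2.2 j)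
        rw [hdexp j]
        exact h
      have hkey : enormSq (fun j => Complex.exp ((t:ℂ)*(α j)) * x.2.2.2 j)
          ≤ enormSq x.2.2.2 + 2*(herm x.2.2.2 (ct t)).re + t*b.im := by
        calc enormSq (fun j => Complex.exp ((t:ℂ)*(α j)) * x.2.2.2 j)
            = ∑ j, ‖Complex.exp ((t:ℂ)*(α j)) * x.2.2.2 j‖^2 := rfl
          _ ≤ ∑ j, (‖x.2.2.2 j‖^2 + 2*(x.2.2.2 j * (starRingEnd ℂ) (ct t j)).re
                + t * ((uu j^2+vv j^2)/(2*uu j*‖1 - d j‖^2) * ‖c j‖^2)) :=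
              Finset.sum_le_sum hsum
          _ = enormSq x.2.2.2 + 2*(herm x.2.2.2 (ct t)).re
                + t*(∑ j, (uu j^2+vv j^2)/(2*uu j*‖1 - d j‖^2) * ‖c j‖^2) := by
              have h2 : (herm x.2.2.2 (ct t)).re
                  = ∑ j, (x.2.2.2 j * (starRingEnd ℂ) (ct t j)).re := by
                rw [herm, Complex.re_sum]
              rw [Finset.sum_add_distrib, Finset.sum_add_distrib, h2, Finset.mul_sum,
                Finset.mul_sum]
              rfl
          _ ≤ enormSq x.2.2.2 + 2*(herm x.2.2.2 (ct t)).re + t*b.im := by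
              have := mul_le_mul_of_nonneg_left hb hpos.le
              linarith
      linarith
  · -- Differentiable
    intro t ht
    apply Differentiable.differentiableOn
    simp only [hφ, herm]
    fun_prop
  · -- semigroup law
    intro s hs t ht x hx
    simp only [hφ]
    refine Prod.ext ?_ (Prod.ext rfl (Prod.ext rfl ?_))
    · show x.1 + 2*Complex.I*herm x.2.2.2 (ct (s+t)) + ((s+t:ℝ):ℂ)*b = _
      have key : herm x.2.2.2 (ct (s+t))
          = herm x.2.2.2 (ct t) + herm (fun j => Complex.exp ((t:ℂ)*(α j)) * x.2.2.2 j) (ct s) := by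
        simp only [herm, ← Finset.sum_add_distrib]
        apply Finset.sum_congr rfl
        intro j _
        rw [hctadd s t j, map_add, _root_.map_mul, ← Complex.exp_conj, _root_.map_mul,
          Complex.conj_ofReal, hconjm' j]
        ring
      rw [key]
      push_cast
      ring
    · funext j
      show Complex.exp (((s+t:ℝ):ℂ)*(α j)) * x.2.2.2 j = _
      have hst : ((s+t:ℝ):ℂ) * α j = (s:ℂ)*α j + (t:ℂ)*α j := by push_cast; ring
      rw [hst, Complex.exp_add]
      ring
  · -- uniform convergence
    intro K hKU hK
    rcases hK.isBounded.exists_norm_le with ⟨R0, hR0⟩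
    set R := max R0 0 with hR
    have hRnn : (0:ℝ) ≤ R := le_max_right _ _
    have hRb : ∀ x ∈ K, ‖x‖ ≤ R := fun x hx => (hR0 x hx).trans (le_max_left _ _)
    rw [Metric.tendstoUniformlyOn_iff]
    intro ε hε
    set g : ℝ → ℝ := fun t => 2*(∑ j, ‖ct t j‖)*R + |t| * ‖b‖
        + (∑ j, ‖Complex.exp ((t:ℂ)*α j) - 1‖)*R with hg
    have hgcont : Continuous g := by
      simp only [hg, hct]
      fun_prop
    have hg0 : g 0 = 0 := by
      simp [hg, hct]
    have hev : ∀ᶠ t in nhdsWithin (0:ℝ) (Ioi 0), g t < ε := by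
      have h1 : Tendsto g (nhds 0) (nhds 0) := by
        have h := (hgcont.continuousAt : ContinuousAt g 0)
        rwa [ContinuousAt, hg0] at h
      exact nhdsWithin_le_nhds (h1 (Iio_mem_nhds hε))
    filter_upwards [hev] with t hgt x hxK
    have hwle : ∀ j, ‖x.2.2.2 j‖ ≤ R := by
      intro j
      calc ‖x.2.2.2 j‖ ≤ ‖x.2.2.2‖ := norm_le_pi_norm _ j
        _ ≤ ‖x.2.2‖ := norm_snd_le _
        _ ≤ ‖x.2‖ := norm_snd_le _
        _ ≤ ‖x‖ := norm_snd_le _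
        _ ≤ R := hRb x hxK
    rw [dist_eq_norm]
    simp only [id_eq]
    have hdiff : x - φ t x = ((-(2*Complex.I*herm x.2.2.2 (ct t) + (t:ℂ)*b)),
        0, 0, fun j => (1 - Complex.exp ((t:ℂ)*α j)) * x.2.2.2 j) := by
      simp only [hφ]
      refine Prod.ext ?_ (Prod.ext ?_ (Prod.ext ?_ ?_))
      · show x.1 - (x.1 + 2*Complex.I*herm x.2.2.2 (ct t) + (t:ℂ)*b) = _
        ring
      · show x.2.1 - x.2.1 = 0
        exact sub_self _
      · show x.2.2.1 - x.2.2.1 = 0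
        exact sub_self _
      · funext j
        show x.2.2.2 j - Complex.exp ((t:ℂ)*α j) * x.2.2.2 j = _
        ring
    rw [hdiff]
    have hctnn : (0:ℝ) ≤ ∑ j, ‖ct t j‖ := Finset.sum_nonneg fun j _ => norm_nonneg _
    have hexnn : (0:ℝ) ≤ ∑ j, ‖Complex.exp ((t:ℂ)*α j) - 1‖ :=
      Finset.sum_nonneg fun j _ => norm_nonneg _
    have hbound1 : ‖-(2*Complex.I*herm x.2.2.2 (ct t) + (t:ℂ)*b)‖
        ≤ 2*(∑ j, ‖ct t j‖)*R + |t| * ‖b‖ := by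
      rw [norm_neg]
      refine (norm_add_le _ _).trans (add_le_add ?_ ?_)
      · rw [norm_mul, norm_mul]
        have hI : ‖Complex.I‖ = 1 := by
          rw [Complex.norm_I]
        have h2n : ‖(2:ℂ)‖ = 2 := by
          simp
        rw [hI, h2n, mul_one]
        have hH : ‖herm x.2.2.2 (ct t)‖ ≤ (∑ j, ‖ct t j‖)*R := by
          rw [herm]
          refine (norm_sum_le _ _).trans ?_
          rw [Finset.sum_mul]
          refine Finset.sum_le_sum fun j _ => ?_
          rw [norm_mul, RCLike.norm_conj]
          calc ‖x.2.2.2 j‖ * ‖ct t j‖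
              ≤ R * ‖ct t j‖ := mul_le_mul_of_nonneg_right (hwle j) (norm_nonneg _)
            _ = ‖ct t j‖ * R := mul_comm _ _
        linarith
      · rw [norm_mul]
        have hts : ‖((t:ℝ):ℂ)‖ = |t| := by
          rw [Complex.norm_real, Real.norm_eq_abs]
        rw [hts]
    have hbound4 : ‖(fun j => (1 - Complex.exp ((t:ℂ)*α j)) * x.2.2.2 j : Fin r → ℂ)‖
        ≤ (∑ j, ‖Complex.exp ((t:ℂ)*α j) - 1‖)*R := by
      rw [pi_norm_le_iff_of_nonneg (by positivity)]
      intro j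
      rw [norm_mul, norm_sub_rev]
      calc ‖Complex.exp ((t:ℂ)*α j) - 1‖ * ‖x.2.2.2 j‖
          ≤ ‖Complex.exp ((t:ℂ)*α j) - 1‖ * R :=
            mul_le_mul_of_nonneg_left (hwle j) (norm_nonneg _)
        _ ≤ (∑ i, ‖Complex.exp ((t:ℂ)*α i) - 1‖) * R :=
            mul_le_mul_of_nonneg_right
              (Finset.single_le_sum (f := fun i => ‖Complex.exp ((t:ℂ)*α i) - 1‖)
                (fun i _ => norm_nonneg _) (Finset.mem_univ j)) hRnn
    have hfinal : ‖(((-(2*Complex.I*herm x.2.2.2 (ct t) + (t:ℂ)*b)),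
        0, 0, fun j => (1 - Complex.exp ((t:ℂ)*α j)) * x.2.2.2 j) : E4 p q r)‖ ≤ g t := by
      have hgtnn1 : (0:ℝ) ≤ (∑ j, ‖Complex.exp ((t:ℂ)*α j) - 1‖)*R := by positivity
      have hgtnn2 : (0:ℝ) ≤ 2*(∑ j, ‖ct t j‖)*R + |t| * ‖b‖ := by positivity
      simp only [Prod.norm_def, norm_zero]
      rw [show g t = 2*(∑ j, ‖ct t j‖)*R + |t| * ‖b‖
        + (∑ j, ‖Complex.exp ((t:ℂ)*α j) - 1‖)*R from rfl]
      apply max_le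
      · linarith
      · apply max_le
        · linarith
        · apply max_le
          · linarith
          · linarith
    exact lt_of_le_of_lt hfinal hgt
  · -- φ 1 = ψ
    intro x hx
    rw [hψ]
    simp only [hφ]
    have hct1 : ct 1 = c := by
      funext j
      simp only [hct, Complex.ofReal_one, one_mul]
      rw [mul_div_assoc, div_self (hm1 j), mul_one]
    refine Prod.ext ?_ (Prod.ext rfl (Prod.ext rfl ?_))
    · show x.1 + 2*Complex.I*herm x.2.2.2 (ct 1) + ((1:ℝ):ℂ)*b = _
      rw [hct1]
      push_cast
      ring
    · funext j
      show Complex.exp (((1:ℝ):ℂ)*(α j)) * x.2.2.2 j = (Matrix.diagonal d *ᵥ x.2.2.2) j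
      rw [Matrix.mulVec_diagonal, hdexp j]
      push_cast
      rw [one_mul]
end
end

section
/- Let N = 1 + p + q + r and write points of ℂ^N as (z, u, v, w) ∈ ℂ × ℂ^p × ℂ^q × ℂ^r, so that ℍ^N = {(z,u,v,w) : Im z > |u|² + |v|² + |w|²}. Let a ∈ ℂ^p, b ∈ ℂ, c = (c₁,…,c_r) ∈ ℂ^r, let D be a q×q diagonal matrix whose diagonal entries have modulus 1 and are different from 1, and let A = diag(λ₁, …, λ_r) with λ_j = exp(−u_j + i v_j), u_j > 0, v_j ∈ [0, 2π). Assume ψ(z,u,v,w) = (z + 2i⟨u, a⟩ + 2i⟨w, c⟩ + b, u + a, D v, A w) is a self-map of ℍ^N. If Im(b) − |a|² ≥ Σ_{j=1}^{r} (u_j² + v_j²)/(2 u_j |1 − λ_j|²) · |c_j|², then ψ can be embedded into a semigroup of holomorphic self-maps of ℍ^N. -/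
open Matrix Set Complex Filter

noncomputable section

private lemma stmtaux1 (s : ℝ) (hs : 0 ≤ s) : 2*s ≤ Real.exp s - Real.exp (-s) := by
  rcases eq_or_lt_of_le hs with h | h
  · simp [← h]
  · have := (Real.self_lt_sinh_iff).mpr h
    rw [Real.sinh_eq] at this
    linarith

private lemma stmtaux2 (s : ℝ) (hs : 0 ≤ s) : 2*(1 - Real.exp (-s)) ≤ s*(1 + Real.exp (-s)) := by
  have hf : ∀ x : ℝ, HasDerivAt (fun x : ℝ => x + x*Real.exp (-x) + 2*Real.exp (-x))
      (1 - (1+x)*Real.exp (-x)) x := by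
    intro x
    have he : HasDerivAt (fun x : ℝ => Real.exp (-x)) (-Real.exp (-x)) x := by
      simpa [Function.comp_def] using (Real.hasDerivAt_exp (-x)).comp x ((hasDerivAt_id x).neg)
    have h2 := ((hasDerivAt_id x).add (((hasDerivAt_id x).mul he))).add (he.const_mul 2)
    exact h2.congr_deriv (show _ = 1 - (1+x)*Real.exp (-x) by simp only [id]; ring)
  have hmono : MonotoneOn (fun x : ℝ => x + x*Real.exp (-x) + 2*Real.exp (-x)) (Ici 0) := by
    apply monotoneOn_of_deriv_nonneg (convex_Ici 0)
    · fun_prop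
    · intro x _
      exact (hf x).differentiableAt.differentiableWithinAt
    · intro x hx
      rw [interior_Ici] at hx
      rw [(hf x).deriv]
      have h1 : (x + 1) * Real.exp (-x) ≤ 1 := by
        have h2 := Real.add_one_le_exp x
        have h3 := Real.exp_neg x
        have hpos := Real.exp_pos x
        rw [h3]
        rw [mul_inv_le_iff₀ hpos] -- (x+1) * (exp x)⁻¹ ≤ 1 ↔ x+1 ≤ exp x ?
        linarith
      nlinarith [Real.exp_pos (-x)]
  have := hmono (self_mem_Ici : (0:ℝ) ∈ Ici (0:ℝ)) hs hs
  simp only [zero_mul, zero_add, mul_zero, Real.exp_zero, neg_zero, mul_one] at this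
  nlinarith [this]

private lemma stmtaux3 (θ : ℝ) : 1 - Real.cos θ ≤ θ^2/2 := by
  have h1 := Real.sin_sq_le_sq (x := θ/2)
  have h2 := Real.cos_two_mul' (θ/2)
  have h3 := Real.sin_sq_add_cos_sq (θ/2)
  have h4 : 2 * (θ/2) = θ := by ring
  rw [h4] at h2
  nlinarith

private lemma stmtquad (α m : ℝ) (hα : 0 ≤ α) (hm : 0 ≤ m) (γ w : ℂ) (h : ‖γ‖^2 ≤ α * m) :
    0 ≤ α * ‖w‖^2 + 2*(γ * w).re + m := by
  have h1 : -(‖γ‖*‖w‖) ≤ (γ*w).re := by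
    have := Complex.abs_re_le_norm (γ*w)
    have h2 : ‖γ*w‖ = ‖γ‖*‖w‖ := by
      rw [norm_mul]
    rw [h2] at this
    cases' abs_le.mp this with hl hr
    linarith
  have h2 : (2*‖γ‖*‖w‖)^2 ≤ (α*‖w‖^2 + m)^2 := by
    nlinarith [mul_le_mul_of_nonneg_right h (sq_nonneg ‖w‖), sq_nonneg (α*‖w‖^2 - m)]
  have h3 : 2*‖γ‖*‖w‖ ≤ α*‖w‖^2 + m := by
    nlinarith [mul_nonneg (mul_nonneg (by norm_num : (0:ℝ) ≤ 2) (norm_nonneg γ)) (norm_nonneg w),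
      add_nonneg (mul_nonneg hα (sq_nonneg ‖w‖)) hm]
  linarith

private lemma stmtkey (u v t : ℝ) (hu : 0 < u) (ht : 0 ≤ t) :
    ‖1 - Complex.exp ((t:ℂ) * (-(u:ℂ) + (v:ℂ)*Complex.I))‖ ^ 2
      ≤ t * ((u^2+v^2) / (2*u)) * (1 - Real.exp (-(2*(t*u)))) := by
  rcases eq_or_lt_of_le ht with h0 | htpos
  · subst h0
    simp
  set ζ : ℂ := (t:ℂ) * (-(u:ℂ) + (v:ℂ)*Complex.I) with hζ
  have hre : ζ.re = -(t*u) := by simp [hζ, Complex.mul_re]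
  have him : ζ.im = t*v := by simp [hζ, Complex.mul_im]
  set X := Real.exp (-(t*u)) with hX
  have hnorm : ‖1 - Complex.exp ζ‖^2
      = (1 - X * Real.cos (t*v))^2 + (X * Real.sin (t*v))^2 := by
    have h5 : ‖1 - Complex.exp ζ‖^2
        = (1 - Complex.exp ζ).re^2 + (1 - Complex.exp ζ).im^2 := by
      rw [Complex.sq_norm, Complex.normSq_apply]; ring
    rw [h5]
    simp [Complex.exp_re, Complex.exp_im, hre, him, hX]
  have hX2 : Real.exp (-(2*(t*u))) = X^2 := by
    rw [hX, sq, ← Real.exp_add]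
    congr 1; ring
  rw [hnorm, hX2]
  have hXpos : 0 < X := Real.exp_pos _
  have hXle : X ≤ 1 := Real.exp_le_one_iff.mpr (by nlinarith)
  have hs := Real.sin_sq_add_cos_sq (t*v)
  have hS : 0 < t*u := mul_pos htpos hu
  have h1 := stmtaux1 (t*u) hS.le
  have h2 := stmtaux2 (t*u) hS.le
  have h3 := stmtaux3 (t*v)
  have hB : 2*(t*u)*X ≤ 1 - X^2 := by
    have hprod : Real.exp (t*u) * X = 1 := by
      rw [hX, ← Real.exp_add]; simp
    nlinarith [mul_le_mul_of_nonneg_right h1 hXpos.le]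
  have hA : 2*(1-X)^2 ≤ (t*u)*(1-X^2) := by
    nlinarith [mul_le_mul_of_nonneg_right h2 (sub_nonneg.mpr hXle)]
  have hrhs : t * ((u^2+v^2) / (2*u)) * (1 - X^2)
      = (((t*u)^2+(t*v)^2)*(1-X^2))/(2*(t*u)) := by
    field_simp
  rw [hrhs, le_div_iff₀ (by positivity)]
  nlinarith [mul_le_mul_of_nonneg_left hA hS.le,
    mul_le_mul_of_nonneg_left hB (sq_nonneg (t*v)),
    mul_le_mul_of_nonneg_left h3 (by positivity : (0:ℝ) ≤ 4*(t*u)*X),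
    sq_nonneg (t*v), hS.le, hXpos.le]

set_option maxHeartbeats 3200000 in
/-- Let `ψ(z,u,v,w) = (z + 2i⟨u,a⟩ + 2i⟨w,c⟩ + b, u + a, Dv, Aw)` be a parabolic
self-map of `ℍ^N`, where `D` is diagonal with unimodular diagonal entries
different from `1`, and `A = diag(λ₁, …, λ_r)` with `λ_j = exp(-u_j + i v_j)`,
`u_j > 0`, `v_j ∈ [0, 2π)`. If
`Im b - |a|² ≥ ∑_j (u_j² + v_j²)/(2 u_j |1 - λ_j|²) |c_j|²`, then `ψ` embeds into
a semigroup of holomorphic self-maps of `ℍ^N`. -/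
theorem stmt12 {p q r : ℕ} (a : Fin p → ℂ) (b : ℂ) (c : Fin r → ℂ)
    (e : Fin q → ℂ) (he : ∀ j, ‖e j‖ = 1) (he1 : ∀ j, e j ≠ 1)
    (uu vv : Fin r → ℝ) (huu : ∀ j, 0 < uu j)
    (hvv : ∀ j, vv j ∈ Ico (0 : ℝ) (2 * Real.pi))
    (d : Fin r → ℂ)
    (hd : ∀ j, d j = Complex.exp (-(uu j : ℂ) + (vv j : ℂ) * Complex.I))
    (ψ : E4 p q r → E4 p q r)
    (hψ : ∀ x, ψ x = (x.1 + 2 * Complex.I * herm x.2.1 a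
        + 2 * Complex.I * herm x.2.2.2 c + b,
      x.2.1 + a, (Matrix.diagonal e).mulVec x.2.2.1,
      (Matrix.diagonal d).mulVec x.2.2.2))
    (hself : MapsTo ψ (Siegel4 p q r) (Siegel4 p q r))
    (hb : b.im - enormSq a ≥ ∑ j : Fin r,
      (uu j ^ 2 + vv j ^ 2) / (2 * uu j * ‖1 - d j‖ ^ 2) * ‖c j‖ ^ 2) :
    ∃ φt : ℝ → E4 p q r → E4 p q r,
      IsHolSemigroupOn (Siegel4 p q r) φt ∧ ∀ z ∈ Siegel4 p q r, φt 1 z = ψ z := by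
  classical
  set L : Fin r → ℂ := fun j => -(uu j : ℂ) + (vv j : ℂ) * Complex.I with hL
  set g : ℝ → Fin r → ℂ := fun t j => Complex.exp ((t:ℂ) * L j) with hg
  set φ : ℝ → E4 p q r → E4 p q r := fun t x =>
    (x.1 + 2*Complex.I*(t:ℂ)*herm x.2.1 a
       + 2*Complex.I*(∑ j, (1 - g t j)/(1 - d j) * (starRingEnd ℂ) (c j) * x.2.2.2 j)
       + (t:ℂ)*b + Complex.I*(t:ℂ)*((t:ℂ)-1)*(enormSq a : ℂ),
     fun j => x.2.1 j + (t:ℂ)*a j,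
     fun j => Complex.exp ((t:ℂ) * Complex.log (e j)) * x.2.2.1 j,
     fun j => g t j * x.2.2.2 j) with hφ
  -- basic facts
  have hd1 : ∀ j, d j = g 1 j := by
    intro j; rw [hd]; simp [hg, hL]
  have hgnorm : ∀ (t : ℝ) j, ‖g t j‖ = Real.exp (-(t * uu j)) := by
    intro t j
    rw [hg]
    rw [Complex.norm_exp]
    congr 1
    simp [hL, Complex.mul_re]
  have hdne : ∀ j, (1:ℂ) - d j ≠ 0 := by
    intro j hj
    have h1 : d j = 1 := by linear_combination -hj
    have h2 : ‖d j‖ < 1 := by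
      rw [hd1, hgnorm]
      rw [Real.exp_lt_one_iff]
      nlinarith [huu j]
    rw [h1] at h2; simp at h2
  have hgadd : ∀ (s t : ℝ) j, g (s+t) j = g s j * g t j := by
    intro s t j
    rw [hg]
    simp only
    rw [← Complex.exp_add]
    congr 1
    push_cast
    ring
  have hg0 : ∀ j, g 0 j = 1 := by
    intro j; rw [hg]; simp
  -- φ 0 = identity (globally)
  have hφ0 : ∀ y : E4 p q r, φ 0 y = y := by
    intro y
    obtain ⟨z, u, v, w⟩ := y
    simp only [hφ, hg0, Prod.mk.injEq]
    refine ⟨by push_cast; simp, by funext j; push_cast; simp,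
      by funext j; push_cast; simp, by funext j; exact one_mul _⟩
  refine ⟨φ, ⟨?_, ?_, ?_, ?_, ?_⟩, ?_⟩
  · -- MapsTo
    intro t ht x hx
    obtain ⟨z, u, v, w⟩ := x
    simp only [Siegel4, mem_setOf_eq] at hx ⊢
    have hz2 : ∀ z1 z2 : ℂ, ‖z1 + z2‖^2 = ‖z1‖^2 + 2*(z1*(starRingEnd ℂ) z2).re + ‖z2‖^2 := by
      intro z1 z2
      rw [Complex.sq_norm, Complex.sq_norm, Complex.sq_norm, Complex.normSq_add]
      ring
    have hA : enormSq (fun j => u j + (t:ℂ)*a j)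
        = enormSq u + 2*t*(herm u a).re + t^2*enormSq a := by
      unfold enormSq herm
      rw [Complex.re_sum, Finset.mul_sum, Finset.mul_sum,
        ← Finset.sum_add_distrib, ← Finset.sum_add_distrib]
      refine Finset.sum_congr rfl fun j _ => ?_
      rw [hz2]
      have h1 : ‖(t:ℂ)*a j‖^2 = t^2*‖a j‖^2 := by
        rw [norm_mul, Complex.norm_real, Real.norm_eq_abs, mul_pow, _root_.sq_abs]
      have h2 : (u j * (starRingEnd ℂ) ((t:ℂ)*a j)).re = t*(u j * (starRingEnd ℂ) (a j)).re := by
        rw [_root_.map_mul, Complex.conj_ofReal,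
          show u j * ((t:ℂ) * (starRingEnd ℂ) (a j)) = (t:ℂ) * (u j * (starRingEnd ℂ) (a j)) by ring,
          Complex.re_ofReal_mul]
      rw [h1, h2]; ring
    have hB : enormSq (fun j => Complex.exp ((t:ℂ)*Complex.log (e j)) * v j) = enormSq v := by
      unfold enormSq
      refine Finset.sum_congr rfl fun j _ => ?_
      rw [norm_mul]
      have h1 : ‖Complex.exp ((t:ℂ)*Complex.log (e j))‖ = 1 := by
        rw [Complex.norm_exp]
        have h3 : ((t:ℂ)*Complex.log (e j)).re = t * Real.log ‖e j‖ := by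
          rw [Complex.re_ofReal_mul, Complex.log_re]
        rw [h3, he j, Real.log_one, mul_zero, Real.exp_zero]
      rw [h1, one_mul]
    have hC : enormSq (fun j => g t j * w j) = ∑ j, Real.exp (-(2*(t*uu j))) * ‖w j‖^2 := by
      unfold enormSq
      refine Finset.sum_congr rfl fun j _ => ?_
      rw [norm_mul, mul_pow, hgnorm,
        show Real.exp (-(t*uu j))^2 = Real.exp (-(2*(t*uu j))) by
          rw [sq, ← Real.exp_add]; congr 1; ring]
    have hD : (φ t (z,u,v,w)).1.im = z.im + 2*t*(herm u a).re
        + (∑ j, 2*((1 - g t j)/(1 - d j) * (starRingEnd ℂ) (c j) * w j).re)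
        + t*b.im + t*(t-1)*enormSq a := by
      have him2 : ∀ ζ : ℂ, (2*Complex.I*ζ).im = 2*ζ.re := by
        intro ζ
        simp [Complex.mul_im, Complex.mul_re]
      simp only [hφ]
      rw [show (z + 2*Complex.I*(t:ℂ)*herm u a
          + 2*Complex.I*(∑ j, (1 - g t j)/(1 - d j) * (starRingEnd ℂ) (c j) * w j)
          + (t:ℂ)*b + Complex.I*(t:ℂ)*((t:ℂ)-1)*((enormSq a : ℝ):ℂ))
        = z + 2*Complex.I*((t:ℂ)*herm u a)
          + 2*Complex.I*(∑ j, (1 - g t j)/(1 - d j) * (starRingEnd ℂ) (c j) * w j)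
          + (t:ℂ)*b
          + Complex.I*(((t*(t-1)*enormSq a : ℝ)):ℂ) by
            push_cast
            ring]
      rw [Complex.add_im, Complex.add_im, Complex.add_im, Complex.add_im,
        him2, him2, Complex.re_ofReal_mul, Complex.re_sum, Complex.im_ofReal_mul,
        Complex.I_mul_im, Complex.ofReal_re, Finset.mul_sum]
      ring
    -- the quadratic estimate
    have hquad : ∀ j : Fin r, 0 ≤ (1 - Real.exp (-(2*(t*uu j))))*‖w j‖^2
        + 2*((1 - g t j)/(1 - d j) * (starRingEnd ℂ) (c j) * (w j)).re
        + t*((uu j^2 + vv j^2)/(2*uu j*‖1 - d j‖^2)*‖c j‖^2) := by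
      intro j
      have hne : ‖(1:ℂ) - d j‖ ≠ 0 := norm_ne_zero_iff.mpr (hdne j)
      have hnorm_pos : 0 < ‖(1:ℂ) - d j‖ := norm_pos_iff.mpr (hdne j)
      have hα : 0 ≤ 1 - Real.exp (-(2*(t*uu j))) := by
        have : Real.exp (-(2*(t*uu j))) ≤ 1 := by
          rw [Real.exp_le_one_iff]
          nlinarith [huu j]
        linarith
      have hm : 0 ≤ t*((uu j^2 + vv j^2)/(2*uu j*‖1 - d j‖^2)*‖c j‖^2) := by
        have := huu j
        positivity
      have hγ : ‖(1 - g t j)/(1 - d j) * (starRingEnd ℂ) (c j)‖^2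
          ≤ (1 - Real.exp (-(2*(t*uu j)))) * (t*((uu j^2 + vv j^2)/(2*uu j*‖1 - d j‖^2)*‖c j‖^2)) := by
        have hkey := stmtkey (uu j) (vv j) t (huu j) ht
        have hgj : g t j = Complex.exp ((t:ℂ) * (-(uu j:ℂ) + (vv j:ℂ)*Complex.I)) := by
          rw [hg]
        calc ‖(1 - g t j)/(1 - d j) * (starRingEnd ℂ) (c j)‖^2
            = ‖1 - g t j‖^2 * (‖c j‖^2/‖1 - d j‖^2) := by
              rw [norm_mul, norm_div, RCLike.norm_conj, mul_pow, div_pow]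
              ring
          _ ≤ (t * ((uu j^2 + vv j^2)/(2*uu j)) * (1 - Real.exp (-(2*(t*uu j)))))
                * (‖c j‖^2/‖1 - d j‖^2) := by
              refine mul_le_mul_of_nonneg_right ?_ (by positivity)
              rw [hgj]
              exact hkey
          _ = (1 - Real.exp (-(2*(t*uu j)))) * (t*((uu j^2 + vv j^2)/(2*uu j*‖1 - d j‖^2)*‖c j‖^2)) := by
              field_simp
      have := stmtquad (1 - Real.exp (-(2*(t*uu j))))
        (t*((uu j^2 + vv j^2)/(2*uu j*‖1 - d j‖^2)*‖c j‖^2)) hα hm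
        ((1 - g t j)/(1 - d j) * (starRingEnd ℂ) (c j)) (w j) hγ
      linarith
    have hsum_nonneg : 0 ≤ ∑ j, ((1 - Real.exp (-(2*(t*uu j))))*‖w j‖^2
        + 2*((1 - g t j)/(1 - d j) * (starRingEnd ℂ) (c j) * (w j)).re
        + t*((uu j^2 + vv j^2)/(2*uu j*‖1 - d j‖^2)*‖c j‖^2)) :=
      Finset.sum_nonneg fun j _ => hquad j
    have hsplit : ∑ j, ((1 - Real.exp (-(2*(t*uu j))))*‖w j‖^2
        + 2*((1 - g t j)/(1 - d j) * (starRingEnd ℂ) (c j) * (w j)).re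
        + t*((uu j^2 + vv j^2)/(2*uu j*‖1 - d j‖^2)*‖c j‖^2))
        = (enormSq w - ∑ j, Real.exp (-(2*(t*uu j)))*‖w j‖^2)
          + (∑ j, 2*((1 - g t j)/(1 - d j) * (starRingEnd ℂ) (c j) * (w j)).re)
          + t * ∑ j, ((uu j^2 + vv j^2)/(2*uu j*‖1 - d j‖^2)*‖c j‖^2) := by
      unfold enormSq
      rw [← Finset.sum_sub_distrib, Finset.mul_sum, ← Finset.sum_add_distrib,
        ← Finset.sum_add_distrib]
      refine Finset.sum_congr rfl fun j _ => ?_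
      ring
    have hbb : t * ∑ j, ((uu j^2 + vv j^2)/(2*uu j*‖1 - d j‖^2)*‖c j‖^2)
        ≤ t * (b.im - enormSq a) := by
      apply mul_le_mul_of_nonneg_left _ ht
      exact hb
    rw [hA, hB, hC, hD]
    rw [hsplit] at hsum_nonneg
    linarith [hx, hsum_nonneg, hbb]
  · -- Differentiable
    intro t _
    apply Differentiable.differentiableOn
    have hu : Differentiable ℂ (fun x : E4 p q r => x.2.1) :=
      differentiable_fst.comp differentiable_snd
    have hv : Differentiable ℂ (fun x : E4 p q r => x.2.2.1) :=
      differentiable_fst.comp (differentiable_snd.comp differentiable_snd)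
    have hw : Differentiable ℂ (fun x : E4 p q r => x.2.2.2) :=
      differentiable_snd.comp (differentiable_snd.comp differentiable_snd)
    have huj : ∀ j, Differentiable ℂ (fun x : E4 p q r => x.2.1 j) := fun j =>
      (ContinuousLinearMap.proj (R := ℂ) (φ := fun _ : Fin p => ℂ) j).differentiable.comp hu
    have hvj : ∀ j, Differentiable ℂ (fun x : E4 p q r => x.2.2.1 j) := fun j =>
      (ContinuousLinearMap.proj (R := ℂ) (φ := fun _ : Fin q => ℂ) j).differentiable.comp hv
    have hwj : ∀ j, Differentiable ℂ (fun x : E4 p q r => x.2.2.2 j) := fun j =>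
      (ContinuousLinearMap.proj (R := ℂ) (φ := fun _ : Fin r => ℂ) j).differentiable.comp hw
    have hH : Differentiable ℂ (fun x : E4 p q r => herm x.2.1 a) := by
      unfold herm
      exact Differentiable.fun_sum (fun j _ => (huj j).mul_const _)
    have hS : Differentiable ℂ
        (fun x : E4 p q r => ∑ j, (1 - g t j)/(1 - d j) * (starRingEnd ℂ) (c j) * x.2.2.2 j) :=
      Differentiable.fun_sum (fun j _ => (hwj j).const_mul _)
    refine Differentiable.prodMk ?_ (Differentiable.prodMk ?_ (Differentiable.prodMk ?_ ?_))
    · exact (((differentiable_fst.add (hH.const_mul _)).add (hS.const_mul _)).add_const _).add_const _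
    · exact differentiable_pi.mpr fun j => (huj j).add_const _
    · exact differentiable_pi.mpr fun j => (hvj j).const_mul _
    · exact differentiable_pi.mpr fun j => (hwj j).const_mul _
  · exact fun y _ => hφ0 y
  · -- semigroup law
    intro s hs t ht x _
    obtain ⟨z, u, v, w⟩ := x
    simp only [hφ, Prod.mk.injEq]
    have hherm : herm (fun j => u j + (t:ℂ)*a j) a
        = herm u a + (t:ℂ)*((enormSq a : ℝ):ℂ) := by
      unfold herm enormSq
      push_cast
      rw [Finset.mul_sum, ← Finset.sum_add_distrib]
      refine Finset.sum_congr rfl fun j _ => ?_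
      have h2 : ((‖a j‖ : ℂ))^2 = a j * (starRingEnd ℂ) (a j) := by
        rw [← Complex.ofReal_pow, Complex.mul_conj]
        norm_cast
        rw [Complex.sq_norm]
      rw [h2]
      ring
    have hsumeq : ∑ j, (1 - g (s+t) j)/(1 - d j) * (starRingEnd ℂ) (c j) * w j
        = (∑ j, (1 - g t j)/(1 - d j) * (starRingEnd ℂ) (c j) * w j)
          + ∑ j, (1 - g s j)/(1 - d j) * (starRingEnd ℂ) (c j) * (g t j * w j) := by
      rw [← Finset.sum_add_distrib]
      refine Finset.sum_congr rfl fun j _ => ?_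
      rw [hgadd]
      field_simp
      ring
    refine ⟨?_, ?_, ?_, ?_⟩
    · rw [hherm, hsumeq]
      push_cast
      ring
    · funext j; push_cast; ring
    · funext j
      rw [← mul_assoc, ← Complex.exp_add]
      congr 1
      push_cast
      ring
    · funext j; rw [hgadd]; ring
  · -- uniform convergence
    intro K hKU hK
    haveI : CompactSpace K := isCompact_iff_compactSpace.mp hK
    have hcont : Continuous (fun y : ℝ × E4 p q r => φ y.1 y.2) := by
      simp only [hφ]
      have h1 : Continuous (fun y : ℝ × E4 p q r => ((y.1 : ℝ) : ℂ)) :=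
        Complex.continuous_ofReal.comp continuous_fst
      have hu : Continuous (fun y : ℝ × E4 p q r => y.2.2.1) :=
        continuous_fst.comp (continuous_snd.comp continuous_snd)
      have huj : ∀ j, Continuous (fun y : ℝ × E4 p q r => y.2.2.1 j) := fun j =>
        (continuous_apply j).comp hu
      have hu1 : Continuous (fun y : ℝ × E4 p q r => y.2.2.2.1) :=
        continuous_fst.comp (continuous_snd.comp (continuous_snd.comp continuous_snd))
      have hvj : ∀ j, Continuous (fun y : ℝ × E4 p q r => y.2.2.2.1 j) := fun j =>
        (continuous_apply j).comp hu1
      have hw1 : Continuous (fun y : ℝ × E4 p q r => y.2.2.2.2) :=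
        continuous_snd.comp (continuous_snd.comp (continuous_snd.comp continuous_snd))
      have hwj : ∀ j, Continuous (fun y : ℝ × E4 p q r => y.2.2.2.2 j) := fun j =>
        (continuous_apply j).comp hw1
      have hgc : ∀ j, Continuous (fun y : ℝ × E4 p q r => g y.1 j) := by
        intro j
        simp only [hg]
        exact Complex.continuous_exp.comp (h1.mul continuous_const)
      refine Continuous.prodMk ?_ (Continuous.prodMk ?_ (Continuous.prodMk ?_ ?_))
      · have hherm : Continuous (fun y : ℝ × E4 p q r => herm y.2.2.1 a) := by
          unfold herm
          exact continuous_finset_sum _ fun j _ => (huj j).mul continuous_const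
        have hsum : Continuous (fun y : ℝ × E4 p q r =>
            ∑ j, (1 - g y.1 j)/(1 - d j) * (starRingEnd ℂ) (c j) * y.2.2.2.2 j) := by
          refine continuous_finset_sum _ fun j _ => ?_
          exact ((((continuous_const.sub (hgc j)).div_const _).mul continuous_const).mul (hwj j))
        have hz : Continuous (fun y : ℝ × E4 p q r => y.2.1) :=
          continuous_fst.comp continuous_snd
        refine ((((hz.add ((continuous_const.mul h1).mul hherm)).add
          (continuous_const.mul hsum)).add (h1.mul continuous_const)).add
          (((continuous_const.mul h1).mul (h1.sub continuous_const)).mul continuous_const))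
      · exact continuous_pi fun j => (huj j).add (h1.mul continuous_const)
      · exact continuous_pi fun j =>
          ((Complex.continuous_exp.comp (h1.mul continuous_const)).mul (hvj j))
      · exact continuous_pi fun j => (hgc j).mul (hwj j)
    have hconts : Continuous (fun y : ℝ × K => φ y.1 (y.2 : E4 p q r)) :=
      hcont.comp (continuous_fst.prodMk (continuous_subtype_val.comp continuous_snd))
    have h0 := Continuous.tendstoUniformly (fun t (x : K) => φ t (x : E4 p q r)) hconts 0
    have heq : (fun x : K => φ 0 (x : E4 p q r)) = (id ∘ ((↑) : K → E4 p q r)) := by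
      funext x2
      exact hφ0 _
    rw [heq] at h0
    rw [tendstoUniformlyOn_iff_tendstoUniformly_comp_coe]
    intro uset huset
    exact (h0 uset huset).filter_mono nhdsWithin_le_nhds
  · -- φ 1 = ψ
    intro x _
    rw [hψ]
    obtain ⟨z, u, v, w⟩ := x
    simp only [hφ, Prod.mk.injEq]
    refine ⟨?_, ?_, ?_, ?_⟩
    · have hsum : ∑ j, (1 - g 1 j)/(1 - d j) * (starRingEnd ℂ) (c j) * w j = herm w c := by
        unfold herm
        refine Finset.sum_congr rfl fun j _ => ?_
        rw [← hd1 j, div_self (hdne j)]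
        ring
      rw [hsum]
      push_cast
      ring
    · funext j
      simp [Pi.add_apply]
    · funext j
      rw [mulVec_diagonal]
      have hez : e j ≠ 0 := by
        intro h
        have := he j
        rw [h] at this
        simp at this
      rw [Complex.ofReal_one, one_mul, Complex.exp_log hez]
    · funext j
      rw [mulVec_diagonal, ← hd1]
end
end

section
/- For all real numbers λ > 0, u < 0, v ≥ 0 with λ + 2u < 0, and all t > 0, one has |e^{t(u+iv)} − 1|² / ((1 − e^{−λt})·(1 − e^{λt}e^{2ut})) ≤ −(u² + v²)/(λ(2u + λ)), and the left-hand side tends to −(u² + v²)/(λ(2u + λ)) as t → 0⁺. (Here |e^{t(u+iv)} − 1|² = (1 − e^{ut})² + 2e^{ut}(1 − cos(vt)), and both factors in the denominator are positive.) -/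
open Set Filter

noncomputable section

lemma sinh_div_eq_integral (p : ℝ) (hp : 0 < p) :
    Real.sinh p / p = ∫ s in (0:ℝ)..1, Real.cosh (p * s) := by
  have h : ∀ s ∈ Set.uIcc (0:ℝ) 1, HasDerivAt (fun s => Real.sinh (p * s) / p) (Real.cosh (p * s)) s := by
    intro s _
    have : HasDerivAt (fun s : ℝ => p * s) p s := by
      simpa using (hasDerivAt_id s).const_mul p
    have := (this.sinh).div_const p
    simpa [mul_comm, mul_div_assoc, mul_div_cancel_left₀ _ hp.ne'] using this
  have hint : IntervalIntegrable (fun s => Real.cosh (p * s)) MeasureTheory.volume 0 1 :=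
    (Real.continuous_cosh.comp (continuous_const.mul continuous_id)).intervalIntegrable 0 1
  rw [intervalIntegral.integral_eq_sub_of_hasDerivAt h hint]
  simp

lemma L1 {p q : ℝ} (hp : 0 ≤ p) (hpq : p ≤ q) : q * Real.sinh p ≤ p * Real.sinh q := by
  rcases eq_or_lt_of_le hp with h | hp'
  · simp [← h]
  have hq : 0 < q := lt_of_lt_of_le hp' hpq
  have key : Real.sinh p / p ≤ Real.sinh q / q := by
    rw [sinh_div_eq_integral p hp', sinh_div_eq_integral q hq]
    apply intervalIntegral.integral_mono_on zero_le_one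
    · exact (Real.continuous_cosh.comp (continuous_const.mul continuous_id)).intervalIntegrable 0 1
    · exact (Real.continuous_cosh.comp (continuous_const.mul continuous_id)).intervalIntegrable 0 1
    · intro s hs
      have hs0 : 0 ≤ s := hs.1
      exact Real.cosh_le_cosh.2 (by
        rw [abs_of_nonneg (by positivity), abs_of_nonneg (by positivity)]
        exact mul_le_mul_of_nonneg_right hpq hs0)
  rw [div_le_div_iff₀ hp' hq] at key
  linarith



lemma cosh_sub_one (x : ℝ) : Real.cosh x - 1 = 2 * Real.sinh (x/2) ^ 2 := by
  have h := Real.cosh_two_mul (x/2)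
  have h2 := Real.cosh_sq (x/2)
  have : Real.cosh x = Real.cosh (2 * (x/2)) := by ring_nf
  rw [this, h, h2]; ring

lemma L2 {p q : ℝ} (hp : 0 ≤ p) (hpq : p ≤ q) :
    q ^ 2 * (Real.cosh p - 1) ≤ p ^ 2 * (Real.cosh q - 1) := by
  have h := L1 (p := p/2) (q := q/2) (by linarith) (by linarith)
  have hsp : 0 ≤ Real.sinh (p/2) := le_trans (by linarith) (Real.self_le_sinh_iff.2 (by linarith))
  have hsq : 0 ≤ Real.sinh (q/2) := le_trans (by linarith) (Real.self_le_sinh_iff.2 (by linarith))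
  rw [cosh_sub_one, cosh_sub_one]
  have hnn : (0:ℝ) ≤ q/2 * Real.sinh (p/2) + p/2 * Real.sinh (q/2) := by
    have : (0:ℝ) ≤ q/2 * Real.sinh (p/2) := mul_nonneg (by linarith) hsp
    have : (0:ℝ) ≤ p/2 * Real.sinh (q/2) := mul_nonneg (by linarith) hsq
    linarith
  nlinarith [mul_le_mul_of_nonneg_left h hnn]

lemma G2 {x : ℝ} (hx : 0 < x) : x * Real.exp (-(x/2)) ≤ 1 - Real.exp (-x) := by
  have hs : x/2 ≤ Real.sinh (x/2) := Real.self_le_sinh_iff.2 (by linarith)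
  have h1 : 1 - Real.exp (-x) = 2 * Real.exp (-(x/2)) * Real.sinh (x/2) := by
    rw [Real.sinh_eq]
    have h0 : Real.exp (-(x/2)) * Real.exp (x/2) = 1 := by rw [← Real.exp_add]; simp
    have h2 : Real.exp (-(x/2)) * Real.exp (-(x/2)) = Real.exp (-x) := by
      rw [← Real.exp_add]; ring_nf
    nlinarith [h0, h2]
  rw [h1]
  have := Real.exp_pos (-(x/2))
  nlinarith

lemma G1xy {x y : ℝ} (hx : 0 < x) (hy : 0 < y) :
    (2*x) * (2*y) * (1 - Real.exp (-(x+y))) ^ 2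
      ≤ (x+y) ^ 2 * ((1 - Real.exp (-(2*x))) * (1 - Real.exp (-(2*y)))) := by
  have habs : |x - y| ≤ x + y := abs_le.2 ⟨by linarith, by linarith⟩
  have h2 := L2 (abs_nonneg (x - y)) habs
  rw [Real.cosh_abs, sq_abs] at h2
  have hPQ : Real.exp (-(x+y)) * Real.exp (x+y) = 1 := by rw [← Real.exp_add, neg_add_cancel, Real.exp_zero]
  have hE : 0 < Real.exp (-(x+y)) := Real.exp_pos _
  have e1 : (1 - Real.exp (-(x+y))) ^ 2
      = 2 * Real.exp (-(x+y)) * (Real.cosh (x+y) - 1) := by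
    rw [Real.cosh_eq]
    have h2' : Real.exp (-(x+y)) * Real.exp (-(x+y)) = Real.exp (-(x+y)+ -(x+y)) := by
      rw [← Real.exp_add]
    nlinarith [hPQ, h2']
  have e2 : (1 - Real.exp (-(2*x))) * (1 - Real.exp (-(2*y)))
      = 2 * Real.exp (-(x+y)) * (Real.cosh (x+y) - Real.cosh (x-y)) := by
    rw [Real.cosh_eq, Real.cosh_eq]
    have m1 : Real.exp (-(x+y)) * Real.exp (x+y) = 1 := hPQ
    have m2 : Real.exp (-(x+y)) * Real.exp (x-y) = Real.exp (-(2*y)) := by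
      rw [← Real.exp_add]; ring_nf
    have m3 : Real.exp (-(x+y)) * Real.exp (-(x-y)) = Real.exp (-(2*x)) := by
      rw [← Real.exp_add]; ring_nf
    have m4 : Real.exp (-(2*x)) * Real.exp (-(2*y)) = Real.exp (-(x+y)) * Real.exp (-(x+y)) := by
      rw [← Real.exp_add, ← Real.exp_add]; ring_nf
    nlinarith [m1, m2, m3, m4]
  rw [e1, e2]
  have key : (2*x) * (2*y) * (Real.cosh (x+y) - 1)
      ≤ (x+y)^2 * (Real.cosh (x+y) - Real.cosh (x-y)) := by linear_combination h2
  nlinarith [mul_le_mul_of_nonneg_left key (le_of_lt hE)]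

lemma num_eq (t u v : ℝ) :
    ‖Complex.exp ((t : ℂ) * ((u : ℂ) + (v : ℂ) * Complex.I)) - 1‖ ^ 2
      = (1 - Real.exp (u*t))^2 + 2 * Real.exp (u*t) * (1 - Real.cos (v*t)) := by
  have hre : ((t : ℂ) * ((u : ℂ) + (v : ℂ) * Complex.I)).re = u * t := by
    simp [Complex.mul_re]; ring
  have him : ((t : ℂ) * ((u : ℂ) + (v : ℂ) * Complex.I)).im = v * t := by
    simp [Complex.mul_im]; ring
  rw [← Complex.normSq_eq_norm_sq, Complex.normSq_apply]
  rw [Complex.sub_re, Complex.sub_im, Complex.exp_re, Complex.exp_im, hre, him]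
  have := Real.sin_sq_add_cos_sq (v*t)
  simp only [Complex.one_re, Complex.one_im]
  linear_combination (Real.exp (u*t))^2 * this







set_option maxHeartbeats 1000000 in
lemma bound (lam u v : ℝ) (hlam : 0 < lam) (hu : u < 0) (hv : 0 ≤ v)
    (hsum : lam + 2 * u < 0) (t : ℝ) (ht : 0 < t) :
    ‖Complex.exp ((t : ℂ) * ((u : ℂ) + (v : ℂ) * Complex.I)) - 1‖ ^ 2 /
        ((1 - Real.exp (-lam * t)) * (1 - Real.exp (lam * t) * Real.exp (2 * u * t)))
      ≤ -((u ^ 2 + v ^ 2) / (lam * (2 * u + lam))) := by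
  set x : ℝ := lam * t / 2 with hxdef
  set y : ℝ := -(lam + 2 * u) * t / 2 with hydef
  have hx : 0 < x := by positivity
  have hy : 0 < y := by rw [hydef]; nlinarith
  -- rewrite exponentials
  have eA : Real.exp (-lam * t) = Real.exp (-(2*x)) := by rw [hxdef]; ring_nf
  have eB : Real.exp (lam * t) * Real.exp (2 * u * t) = Real.exp (-(2*y)) := by
    rw [← Real.exp_add, hydef]; ring_nf
  have eE : Real.exp (u * t) = Real.exp (-(x+y)) := by rw [hxdef, hydef]; ring_nf
  set A : ℝ := 1 - Real.exp (-(2*x)) with hAdef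
  set B : ℝ := 1 - Real.exp (-(2*y)) with hBdef
  have hA : 0 < A := by
    have : Real.exp (-(2*x)) < 1 := Real.exp_lt_one_iff.2 (by linarith)
    simp [hAdef]; linarith
  have hB : 0 < B := by
    have : Real.exp (-(2*y)) < 1 := Real.exp_lt_one_iff.2 (by linarith)
    simp [hBdef]; linarith
  rw [num_eq, eA, eB, eE]
  have hE : 0 < Real.exp (-(x+y)) := Real.exp_pos _
  -- piece 1
  have p1 : (2*x) * (2*y) * (1 - Real.exp (-(x+y))) ^ 2 ≤ (x+y)^2 * (A * B) := G1xy hx hy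
  -- piece 2
  have hcos : 2 * (1 - Real.cos (v*t)) ≤ (v*t)^2 := by
    have := Real.one_sub_sq_div_two_le_cos (x := v*t)
    linarith
  have hprodE : (2*x) * Real.exp (-x) * ((2*y) * Real.exp (-y)) ≤ A * B := by
    have h1 : (2*x) * Real.exp (-x) ≤ A := by
      have := G2 (x := 2*x) (by linarith)
      simpa [show (2*x)/2 = x by ring] using this
    have h2 : (2*y) * Real.exp (-y) ≤ B := by
      have := G2 (x := 2*y) (by linarith)
      simpa [show (2*y)/2 = y by ring] using this
    exact mul_le_mul h1 h2 (by positivity) (le_of_lt hA)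
  have hEsplit : Real.exp (-x) * Real.exp (-y) = Real.exp (-(x+y)) := by
    rw [← Real.exp_add]; ring_nf
  have p2 : (2*x) * (2*y) * (2 * Real.exp (-(x+y)) * (1 - Real.cos (v*t))) ≤ (v*t)^2 * (A * B) := by
    have hc0 : 0 ≤ 1 - Real.cos (v*t) := by
      have := Real.cos_le_one (v*t); linarith
    have step : (2*x) * (2*y) * Real.exp (-(x+y)) * (2 * (1 - Real.cos (v*t)))
        ≤ (A * B) * (v*t)^2 := by
      apply mul_le_mul _ hcos (by linarith) (by positivity)
      calc (2*x) * (2*y) * Real.exp (-(x+y))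
          = (2*x) * Real.exp (-x) * ((2*y) * Real.exp (-y)) := by rw [← hEsplit]; ring
        _ ≤ A * B := hprodE
    nlinarith [step]
  -- combine
  have combo : (2*x) * (2*y) *
      ((1 - Real.exp (-(x+y)))^2 + 2 * Real.exp (-(x+y)) * (1 - Real.cos (v*t)))
      ≤ ((x+y)^2 + (v*t)^2) * (A * B) := by nlinarith [p1, p2]
  -- final arithmetic
  have hAB : 0 < A * B := mul_pos hA hB
  rw [div_le_iff₀ hAB]
  have hne : lam * (2 * u + lam) ≠ 0 := by nlinarith
  have hKxy : -((u ^ 2 + v ^ 2) / (lam * (2 * u + lam))) * ((2*x) * (2*y))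
      = (x+y)^2 + (v*t)^2 := by
    rw [hxdef, hydef, neg_mul, div_mul_eq_mul_div, ← neg_div, div_eq_iff hne]; ring
  have h4xy : 0 < (2*x) * (2*y) := by positivity
  have := combo
  rw [← hKxy] at this
  -- this : 4xy * Num ≤ K * 4xy * (A*B)
  have final : (1 - Real.exp (-(x+y)))^2 + 2 * Real.exp (-(x+y)) * (1 - Real.cos (v*t))
      ≤ -((u ^ 2 + v ^ 2) / (lam * (2 * u + lam))) * (A * B) :=
    le_of_mul_le_mul_left (by nlinarith [this]) h4xy
  linarith [final]

lemma limit_part (lam u v : ℝ) (hlam : 0 < lam) (hu : u < 0) (hv : 0 ≤ v)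
    (hsum : lam + 2 * u < 0) :
    Tendsto (fun t : ℝ =>
      ‖Complex.exp ((t : ℂ) * ((u : ℂ) + (v : ℂ) * Complex.I)) - 1‖ ^ 2 /
        ((1 - Real.exp (-lam * t)) * (1 - Real.exp (lam * t) * Real.exp (2 * u * t))))
      (nhdsWithin 0 (Ioi 0)) (nhds (-((u ^ 2 + v ^ 2) / (lam * (2 * u + lam))))) := by
  set z : ℂ := (u : ℂ) + (v : ℂ) * Complex.I with hzdef
  -- numerator slope
  have hf : HasDerivAt (fun t : ℝ => Complex.exp ((t : ℂ) * z)) z 0 := by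
    have h1 : HasDerivAt (fun w : ℂ => Complex.exp (w * z)) z 0 := by
      simpa using ((hasDerivAt_id (0:ℂ)).mul_const z).cexp
    simpa using h1.comp_ofReal (z := (0:ℝ))
  have hfs := hf.tendsto_slope_zero_right
  have hnum : Tendsto (fun t : ℝ => ‖(t:ℝ)⁻¹ • (Complex.exp ((t : ℂ) * z) - 1)‖ ^ 2)
      (nhdsWithin 0 (Ioi 0)) (nhds (u ^ 2 + v ^ 2)) := by
    have habsz : ‖z‖ ^ 2 = u ^ 2 + v ^ 2 := by
      rw [Complex.sq_norm, Complex.normSq_apply, hzdef]; simp; ring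
    rw [← habsz]
    have := ((continuous_norm.tendsto z).comp hfs).pow 2
    simpa [Function.comp] using this
  -- denominator slopes
  have hg1 : HasDerivAt (fun t : ℝ => 1 - Real.exp (-lam * t)) lam 0 := by
    have h1 : HasDerivAt (fun t : ℝ => -lam * t) (-lam) 0 := by
      simpa using (hasDerivAt_id (0:ℝ)).const_mul (-lam)
    have := (h1.exp).const_sub 1
    simpa using this
  have hg2 : HasDerivAt (fun t : ℝ => 1 - Real.exp (lam * t) * Real.exp (2 * u * t))
      (-(lam + 2*u)) 0 := by
    have heq : (fun t : ℝ => 1 - Real.exp (lam * t) * Real.exp (2 * u * t))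
        = fun t : ℝ => 1 - Real.exp ((lam + 2*u) * t) := by
      funext t; rw [← Real.exp_add]; ring_nf
    rw [heq]
    have h1 : HasDerivAt (fun t : ℝ => (lam + 2*u) * t) (lam + 2*u) 0 := by
      simpa using (hasDerivAt_id (0:ℝ)).const_mul (lam + 2*u)
    have := (h1.exp).const_sub 1
    simpa using this
  have hg1s : Tendsto (fun t : ℝ => t⁻¹ * (1 - Real.exp (-lam * t)))
      (nhdsWithin 0 (Ioi 0)) (nhds lam) := by
    have := hg1.tendsto_slope_zero_right
    simpa [smul_eq_mul] using this
  have hg2s : Tendsto (fun t : ℝ => t⁻¹ * (1 - Real.exp (lam * t) * Real.exp (2 * u * t)))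
      (nhdsWithin 0 (Ioi 0)) (nhds (-(lam + 2*u))) := by
    have := hg2.tendsto_slope_zero_right
    simpa [smul_eq_mul] using this
  have hden := hg1s.mul hg2s
  have hdenne : lam * -(lam + 2*u) ≠ 0 := by nlinarith
  have hdiv := hnum.div hden hdenne
  have hval : (u ^ 2 + v ^ 2) / (lam * -(lam + 2*u)) = -((u ^ 2 + v ^ 2) / (lam * (2 * u + lam))) := by
    rw [← div_neg]
    congr 1
    ring
  rw [← hval]
  apply hdiv.congr'
  filter_upwards [self_mem_nhdsWithin] with t (ht : 0 < t)
  have ht0 : t ≠ 0 := ne_of_gt ht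
  simp only [Pi.div_apply]
  have hsm : ‖(t:ℝ)⁻¹ • (Complex.exp ((t : ℂ) * z) - 1)‖
      = |t|⁻¹ * ‖Complex.exp ((t : ℂ) * z) - 1‖ := by
    rw [norm_smul, Real.norm_eq_abs, abs_inv]
  rw [hsm, abs_of_pos ht]
  set N := ‖Complex.exp ((t : ℂ) * z) - 1‖
  set D1 := 1 - Real.exp (-lam * t)
  set D2 := 1 - Real.exp (lam * t) * Real.exp (2 * u * t)
  have hinv : (t⁻¹)^2 ≠ 0 := by positivity
  calc (t⁻¹ * N) ^ 2 / (t⁻¹ * D1 * (t⁻¹ * D2))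
      = ((t⁻¹)^2 * N^2) / ((t⁻¹)^2 * (D1 * D2)) := by ring_nf
    _ = N^2 / (D1 * D2) := by rw [mul_div_mul_left _ _ hinv]

/-- For `λ > 0`, `u < 0`, `v ≥ 0` with `λ + 2u < 0`, the function
`h(t) = |e^{t(u+iv)} - 1|² / ((1 - e^{-λt})(1 - e^{λt} e^{2ut}))` satisfies
`h(t) ≤ -(u² + v²)/(λ(2u + λ))` for all `t > 0`, and
`h(t) → -(u² + v²)/(λ(2u + λ))` as `t → 0⁺`. -/
theorem stmt14 (lam u v : ℝ) (hlam : 0 < lam) (hu : u < 0) (hv : 0 ≤ v)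
    (hsum : lam + 2 * u < 0) :
    (∀ t : ℝ, 0 < t →
      ‖Complex.exp ((t : ℂ) * ((u : ℂ) + (v : ℂ) * Complex.I)) - 1‖ ^ 2 /
          ((1 - Real.exp (-lam * t)) * (1 - Real.exp (lam * t) * Real.exp (2 * u * t)))
        ≤ -((u ^ 2 + v ^ 2) / (lam * (2 * u + lam)))) ∧
    Tendsto (fun t : ℝ =>
      ‖Complex.exp ((t : ℂ) * ((u : ℂ) + (v : ℂ) * Complex.I)) - 1‖ ^ 2 /
        ((1 - Real.exp (-lam * t)) * (1 - Real.exp (lam * t) * Real.exp (2 * u * t))))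
      (nhdsWithin 0 (Ioi 0)) (nhds (-((u ^ 2 + v ^ 2) / (lam * (2 * u + lam))))) := by
  exact ⟨fun t ht => bound lam u v hlam hu hv hsum t ht, limit_part lam u v hlam hu hv hsum⟩
end
end
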